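/- arXiv:2211.15297 — 7 statements merged into one kernel-verified Lean document; each statement's English description precedes it below -/
import Mathlib

section
/- Let r > 0 and let u, v : ℝ → ℝ be twice differentiable with (u̇(t), v̇(t)) ≠ (0,0) for all t. Then the geodesic curvature of the curve γ(t) = ψ(u(t), v(t)) in H²(r) is given by κ = −[cosh(u/r)(u̇v̈ − üv̇) + (v̇/r)·sinh(u/r)·(2u̇² + cosh²(u/r)v̇²)] / (u̇² + cosh²(u/r)v̇²)^{3/2}. -/
noncomputable section
open Real

/-- Minkowski inner product of `E₁³`. -/
def mink3 (X Y : ℝ × ℝ × ℝ) : ℝ := -(X.1 * Y.1) + X.2.1 * Y.2.1 + X.2.2 * Y.2.2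

/-- Speed `‖γ̇‖ = √(−ẋ² + ẏ² + ż²)` of a curve `(x,y,z)` in `E₁³`. -/
def speed3 (x y z : ℝ → ℝ) (t : ℝ) : ℝ :=
  Real.sqrt (-(deriv x t) ^ 2 + (deriv y t) ^ 2 + (deriv z t) ^ 2)

/-- Geodesic curvature of the curve `(x,y,z)` in `H²(r)`. -/
def kappaH2 (r : ℝ) (x y z : ℝ → ℝ) (t : ℝ) : ℝ :=
  -(x t * (deriv (deriv y) t * deriv z t - deriv y t * deriv (deriv z) t)
      - y t * (deriv (deriv x) t * deriv z t - deriv x t * deriv (deriv z) t)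
      + z t * (deriv (deriv x) t * deriv y t - deriv x t * deriv (deriv y) t))
    / (r * (speed3 x y z t) ^ 3)

/-- First component of `γ(t) = ψ(u(t), v(t))` (semi-geodesic parametrization). -/
def gX (r : ℝ) (u v : ℝ → ℝ) (t : ℝ) : ℝ :=
  r * Real.cosh (u t / r) * Real.cosh (v t / r)

/-- Second component of `γ(t) = ψ(u(t), v(t))`. -/
def gY (r : ℝ) (u v : ℝ → ℝ) (t : ℝ) : ℝ :=
  r * Real.cosh (u t / r) * Real.sinh (v t / r)

/-- Third component of `γ(t) = ψ(u(t), v(t))`. -/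
def gZ (r : ℝ) (u v : ℝ → ℝ) (t : ℝ) : ℝ :=
  r * Real.sinh (u t / r)

/-- `‖γ̇‖` in semi-geodesic coordinates: `√(u̇² + cosh²(u/r) v̇²)`. -/
def speedSG (r : ℝ) (u v : ℝ → ℝ) (t : ℝ) : ℝ :=
  Real.sqrt ((deriv u t) ^ 2 + (Real.cosh (u t / r)) ^ 2 * (deriv v t) ^ 2)

/-- Geodesic curvature of `γ(t) = ψ(u(t), v(t))` in `H²(r)`. -/
def kappaSG (r : ℝ) (u v : ℝ → ℝ) (t : ℝ) : ℝ :=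
  kappaH2 r (gX r u v) (gY r u v) (gZ r u v) t

/-- The Euler–Lagrange equations of the functional `∫ f(u,v) ‖γ̇‖ dt` in
semi-geodesic coordinates. -/
def EulerLagrange (r : ℝ) (f : ℝ → ℝ → ℝ) (u v : ℝ → ℝ) : Prop :=
  ∀ t : ℝ,
    deriv (fun a => f a (v t)) (u t) * speedSG r u v t
        + f (u t) (v t) * Real.sinh (u t / r) * Real.cosh (u t / r) * (deriv v t) ^ 2
          / (r * speedSG r u v t)
      = deriv (fun s => f (u s) (v s) * deriv u s / speedSG r u v s) t
    ∧ deriv (fun b => f (u t) b) (v t) * speedSG r u v t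
      = deriv (fun s =>
          f (u s) (v s) * deriv v s * (Real.cosh (u s / r)) ^ 2 / speedSG r u v s) t

set_option maxHeartbeats 2000000 in
/-- curvature of `γ(t) = ψ(u(t), v(t))` in semi-geodesic coordinates. -/
theorem curvature_in_semi_geodesic_coordinates (r : ℝ) (hr : 0 < r) (u v : ℝ → ℝ)
    (hu : Differentiable ℝ u) (hu2 : Differentiable ℝ (deriv u))
    (hv : Differentiable ℝ v) (hv2 : Differentiable ℝ (deriv v))
    (hreg : ∀ t : ℝ, (deriv u t, deriv v t) ≠ (0, 0)) :
    ∀ t : ℝ,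
      kappaSG r u v t
        = -(Real.cosh (u t / r)
              * (deriv u t * deriv (deriv v) t - deriv (deriv u) t * deriv v t)
            + deriv v t / r * Real.sinh (u t / r)
              * (2 * (deriv u t) ^ 2 + (Real.cosh (u t / r)) ^ 2 * (deriv v t) ^ 2))
          / ((deriv u t) ^ 2 + (Real.cosh (u t / r)) ^ 2 * (deriv v t) ^ 2)
            ^ ((3 : ℝ) / 2) := by

  intro t
  have hr0 : r ≠ 0 := hr.ne'
  have hcu : ∀ x : ℝ, HasDerivAt (fun t => Real.cosh (u t / r))
      (Real.sinh (u x / r) * (deriv u x / r)) x :=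
    fun x => (Real.hasDerivAt_cosh _).comp x ((hu x).hasDerivAt.div_const r)
  have hsu : ∀ x : ℝ, HasDerivAt (fun t => Real.sinh (u t / r))
      (Real.cosh (u x / r) * (deriv u x / r)) x :=
    fun x => (Real.hasDerivAt_sinh _).comp x ((hu x).hasDerivAt.div_const r)
  have hcv : ∀ x : ℝ, HasDerivAt (fun t => Real.cosh (v t / r))
      (Real.sinh (v x / r) * (deriv v x / r)) x :=
    fun x => (Real.hasDerivAt_cosh _).comp x ((hv x).hasDerivAt.div_const r)
  have hsv : ∀ x : ℝ, HasDerivAt (fun t => Real.sinh (v t / r))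
      (Real.cosh (v x / r) * (deriv v x / r)) x :=
    fun x => (Real.hasDerivAt_sinh _).comp x ((hv x).hasDerivAt.div_const r)
  have hX1 : ∀ x : ℝ, HasDerivAt (gX r u v)
      (deriv u x * Real.sinh (u x / r) * Real.cosh (v x / r)
        + deriv v x * Real.cosh (u x / r) * Real.sinh (v x / r)) x := by
    intro x
    have h := ((hcu x).const_mul r).mul (hcv x)
    refine h.congr_deriv ?_
    field_simp
  have hY1 : ∀ x : ℝ, HasDerivAt (gY r u v)
      (deriv u x * Real.sinh (u x / r) * Real.sinh (v x / r)
        + deriv v x * Real.cosh (u x / r) * Real.cosh (v x / r)) x := by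
    intro x
    have h := ((hcu x).const_mul r).mul (hsv x)
    refine h.congr_deriv ?_
    field_simp
  have hZ1 : ∀ x : ℝ, HasDerivAt (gZ r u v) (deriv u x * Real.cosh (u x / r)) x := by
    intro x
    have h := (hsu x).const_mul r
    refine h.congr_deriv ?_
    field_simp
  have hXd : deriv (gX r u v) = fun x =>
      deriv u x * Real.sinh (u x / r) * Real.cosh (v x / r)
        + deriv v x * Real.cosh (u x / r) * Real.sinh (v x / r) :=
    funext fun x => (hX1 x).deriv
  have hYd : deriv (gY r u v) = fun x =>
      deriv u x * Real.sinh (u x / r) * Real.sinh (v x / r)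
        + deriv v x * Real.cosh (u x / r) * Real.cosh (v x / r) :=
    funext fun x => (hY1 x).deriv
  have hZd : deriv (gZ r u v) = fun x => deriv u x * Real.cosh (u x / r) :=
    funext fun x => (hZ1 x).deriv
  have hX2 := ((((hu2 t).hasDerivAt.mul (hsu t)).mul (hcv t)).add
      (((hv2 t).hasDerivAt.mul (hcu t)).mul (hsv t)))
  have hY2 := ((((hu2 t).hasDerivAt.mul (hsu t)).mul (hsv t)).add
      (((hv2 t).hasDerivAt.mul (hcu t)).mul (hcv t)))
  have hZ2 := (hu2 t).hasDerivAt.mul (hcu t)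
  have hXdd : deriv (deriv (gX r u v)) t =
      deriv (deriv u) t * Real.sinh (u t / r) * Real.cosh (v t / r)
        + deriv (deriv v) t * Real.cosh (u t / r) * Real.sinh (v t / r)
        + (((deriv u t) ^ 2 + (deriv v t) ^ 2) * Real.cosh (u t / r) * Real.cosh (v t / r)
            + 2 * deriv u t * deriv v t * Real.sinh (u t / r) * Real.sinh (v t / r)) / r := by
    rw [hXd]; erw [hX2.deriv]
    simp only [Pi.mul_apply]
    field_simp
    ring
  have hYdd : deriv (deriv (gY r u v)) t =
      deriv (deriv u) t * Real.sinh (u t / r) * Real.sinh (v t / r)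
        + deriv (deriv v) t * Real.cosh (u t / r) * Real.cosh (v t / r)
        + (((deriv u t) ^ 2 + (deriv v t) ^ 2) * Real.cosh (u t / r) * Real.sinh (v t / r)
            + 2 * deriv u t * deriv v t * Real.sinh (u t / r) * Real.cosh (v t / r)) / r := by
    rw [hYd]; erw [hY2.deriv]
    simp only [Pi.mul_apply]
    field_simp
    ring
  have hZdd : deriv (deriv (gZ r u v)) t =
      deriv (deriv u) t * Real.cosh (u t / r)
        + (deriv u t) ^ 2 * Real.sinh (u t / r) / r := by
    rw [hZd]; erw [hZ2.deriv]
    field_simp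
  have hs2 : Real.cosh (u t / r) ^ 2 = Real.sinh (u t / r) ^ 2 + 1 := Real.cosh_sq _
  have hS2 : Real.cosh (v t / r) ^ 2 = Real.sinh (v t / r) ^ 2 + 1 := Real.cosh_sq _
  have hW : 0 < (deriv u t) ^ 2 + Real.cosh (u t / r) ^ 2 * (deriv v t) ^ 2 := by
    have hne := hreg t
    have h : deriv u t ≠ 0 ∨ deriv v t ≠ 0 := by
      by_contra h
      push_neg at h
      exact hne (by simp [h.1, h.2])
    have hc2 : (0:ℝ) < Real.cosh (u t / r) ^ 2 := pow_pos (Real.cosh_pos _) 2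
    rcases h with h | h
    · have h1 : 0 < (deriv u t) ^ 2 := pow_two_pos_of_ne_zero h
      nlinarith [sq_nonneg (deriv v t)]
    · have h1 : 0 < (deriv v t) ^ 2 := pow_two_pos_of_ne_zero h
      nlinarith [sq_nonneg (deriv u t)]
  have hsp : speed3 (gX r u v) (gY r u v) (gZ r u v) t
      = Real.sqrt ((deriv u t) ^ 2 + Real.cosh (u t / r) ^ 2 * (deriv v t) ^ 2) := by
    unfold speed3
    rw [(hX1 t).deriv, (hY1 t).deriv, (hZ1 t).deriv]
    congr 1
    linear_combination ((deriv u t)^2 - (deriv v t)^2*(Real.sinh (v t/r))^2 + (deriv v t)^2*(Real.cosh (v t/r))^2 - (deriv v t)^2) * hs2 + ((deriv v t)^2 + (deriv v t)^2*(Real.sinh (u t/r))^2 - (deriv u t)^2*(Real.sinh (u t/r))^2) * hS2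
  have h32 : Real.sqrt ((deriv u t) ^ 2 + Real.cosh (u t / r) ^ 2 * (deriv v t) ^ 2) ^ 3
      = ((deriv u t) ^ 2 + Real.cosh (u t / r) ^ 2 * (deriv v t) ^ 2) ^ ((3:ℝ)/2) := by
    rw [Real.sqrt_eq_rpow, ← Real.rpow_natCast (((deriv u t) ^ 2 + Real.cosh (u t / r) ^ 2 * (deriv v t) ^ 2) ^ ((1:ℝ)/2)) 3, ← Real.rpow_mul hW.le]
    norm_num
  have hW32 : (0:ℝ) < ((deriv u t) ^ 2 + Real.cosh (u t / r) ^ 2 * (deriv v t) ^ 2) ^ ((3:ℝ)/2) :=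
    Real.rpow_pos_of_pos hW _
  unfold kappaSG kappaH2
  rw [hsp, (hX1 t).deriv, (hY1 t).deriv, (hZ1 t).deriv, hXdd, hYdd, hZdd, h32]
  simp only [gX, gY, gZ]
  rw [div_eq_div_iff (by positivity) hW32.ne']
  field_simp
  linear_combination ((-1)*(Real.cosh (u t / r))*(Real.cosh (v t / r))^2*(deriv u t)*(deriv (deriv v) t)*r + (-2)*(Real.sinh (u t / r))*(Real.cosh (v t / r))^2*((deriv u t))^2*(deriv v t) + 1*(Real.cosh (u t / r))*(Real.cosh (v t / r))^2*(deriv v t)*(deriv (deriv u) t)*r + 1*(Real.cosh (u t / r))*(Real.sinh (v t / r))^2*(deriv u t)*(deriv (deriv v) t)*r + 2*(Real.sinh (u t / r))*(Real.sinh (v t / r))^2*((deriv u t))^2*(deriv v t) + (-1)*(Real.cosh (u t / r))*(Real.sinh (v t / r))^2*(deriv v t)*(deriv (deriv u) t)*r + (-1)*(Real.sinh (u t / r))*(Real.cosh (v t / r))^2*((deriv v t))^3 + 1*(Real.sinh (u t / r))*(Real.sinh (v t / r))^2*((deriv v t))^3 + 1*(Real.sinh (u t / r))*((deriv v t))^3)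 * hs2 + ((-1)*(Real.cosh (u t / r))*(deriv u t)*(deriv (deriv v) t)*r + (-2)*(Real.sinh (u t / r))*((deriv u t))^2*(deriv v t) + 1*(Real.cosh (u t / r))*(deriv v t)*(deriv (deriv u) t)*r + (-1)*(Real.sinh (u t / r))^3*((deriv v t))^3 + (-1)*(Real.sinh (u t / r))*((deriv v t))^3) * hS2
end
end

section
/- Let r > 0, let f : ℝ² → ℝ be a positive twice continuously differentiable function, and let u, v : ℝ → ℝ be twice differentiable with (u̇(t), v̇(t)) ≠ (0,0) for all t. Then the curve γ(t) = ψ(u(t), v(t)) satisfies the Euler–Lagrange equations of the functional ∫ f(u,v)‖γ̇‖ dt if and only if its geodesic curvature κ in H²(r) satisfies κ = (1/(f‖γ̇‖))·(v̇ f_u(u,v) cosh(u/r) − u̇ f_v(u,v)/cosh(u/r)) for all t. -/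
noncomputable section
open Real

private lemma bridge_iff (m X Y E : ℝ) (hm : m ≠ 0) (hE : m * (X - Y) = E) :
    X = Y ↔ E = 0 := by
  constructor
  · intro h; rw [← hE, h]; ring
  · intro h; rw [← hE] at h
    rcases mul_eq_zero.mp h with h' | h'
    · exact absurd h' hm
    · exact sub_eq_zero.mp h'

private lemma elimAlg (p q cu w E1 E2 EK : ℝ) (hw : w ≠ 0)
    (h1 : p*E1 + q*E2 = 0) (h2 : cu^2*q*E1 - p*E2 = -(w^2)*EK)
    (hw2 : w^2 = p^2 + cu^2*q^2) :
    (E1 = 0 ∧ E2 = 0) ↔ EK = 0 := by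
  have hw2' : w^2 ≠ 0 := pow_ne_zero _ hw
  constructor
  · rintro ⟨a1, a2⟩
    have h : -(w^2) * EK = 0 := by rw [← h2, a1, a2]; ring
    rcases mul_eq_zero.mp h with h' | h'
    · exact absurd (neg_eq_zero.mp h') hw2'
    · exact h'
  · intro hK
    have h2' : cu^2*q*E1 - p*E2 = 0 := by rw [h2, hK]; ring
    have hE1 : E1 * w^2 = 0 := by linear_combination E1*hw2 + q*h2' + p*h1
    have hE2 : E2 * w^2 = 0 := by linear_combination E2*hw2 - p*h2' + cu^2*q*h1
    exact ⟨(mul_eq_zero.mp hE1).resolve_right hw2',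
           (mul_eq_zero.mp hE2).resolve_right hw2'⟩

private lemma mainAlg (r p q P Q cu su F a b w : ℝ) (hr : r ≠ 0) (hF : F ≠ 0)
    (hw : w ≠ 0) (hcu : cu ≠ 0) (hw2 : w^2 = p^2 + cu^2*q^2) :
    (a * w + F * su * cu * q ^ 2 / (r * w)
        = ((a * p + b * q) * p + F * P) / w
            - F * p * (p * P + cu * su * p * q ^ 2 / r + cu ^ 2 * q * Q) / w ^ 3
      ∧ b * w
        = ((a * p + b * q) * q * cu ^ 2 + F * Q * cu ^ 2 + 2 * F * q * cu * su * p / r) / w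
            - F * q * cu ^ 2 * (p * P + cu * su * p * q ^ 2 / r + cu ^ 2 * q * Q) / w ^ 3)
    ↔ (cu * (P * q - p * Q) * r - su * (2 * p ^ 2 * q + cu ^ 2 * q ^ 3)) / (r * w ^ 3)
        = 1 / (F * w) * (q * a * cu - p * b / cu) := by
  have hm1 : r * w ^ 3 ≠ 0 := by positivity
  have hm2 : F * cu * r * w ^ 3 ≠ 0 := by positivity
  have hb1 : (a * w + F * su * cu * q ^ 2 / (r * w)
        = ((a * p + b * q) * p + F * P) / w
            - F * p * (p * P + cu * su * p * q ^ 2 / r + cu ^ 2 * q * Q) / w ^ 3)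
      ↔ (r*w^4*a + F*su*cu*q^2*w^2 - ((a*p+b*q)*p + F*P)*w^2*r
          + F*p*(p*P*r + cu*su*p*q^2 + cu^2*q*Q*r)) = 0 :=
    bridge_iff _ _ _ _ hm1 (by field_simp; ring)
  have hb2 : (b * w
        = ((a * p + b * q) * q * cu ^ 2 + F * Q * cu ^ 2 + 2 * F * q * cu * su * p / r) / w
            - F * q * cu ^ 2 * (p * P + cu * su * p * q ^ 2 / r + cu ^ 2 * q * Q) / w ^ 3)
      ↔ (r*w^4*b - ((a*p+b*q)*q*cu^2 + F*Q*cu^2)*w^2*r - 2*F*q*cu*su*p*w^2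
          + F*q*cu^2*(p*P*r + cu*su*p*q^2 + cu^2*q*Q*r)) = 0 :=
    bridge_iff _ _ _ _ hm1 (by field_simp; ring)
  have hbK : ((cu * (P * q - p * Q) * r - su * (2 * p ^ 2 * q + cu ^ 2 * q ^ 3)) / (r * w ^ 3)
        = 1 / (F * w) * (q * a * cu - p * b / cu))
      ↔ (F*cu*(cu*(P*q - p*Q)*r - su*(2*p^2*q + cu^2*q^3)) - (q*a*cu^2 - p*b)*w^2*r) = 0 :=
    bridge_iff _ _ _ _ hm2 (by field_simp)
  rw [hb1, hb2, hbK]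
  exact elimAlg p q cu w _ _ _ hw
    (by linear_combination (q*b*w^2*r - q*Q*cu^2*F*r + p*a*w^2*r - p*P*F*r - p*q^2*cu*su*F) * hw2)
    (by ring) hw2
private lemma fcomp_hasDerivAt (f : ℝ → ℝ → ℝ) (hf : ContDiff ℝ 2 (Function.uncurry f))
    (u v : ℝ → ℝ) (hu : Differentiable ℝ u) (hv : Differentiable ℝ v) (t : ℝ) :
    HasDerivAt (fun s => f (u s) (v s))
      (deriv (fun x => f x (v t)) (u t) * deriv u t
        + deriv (fun y => f (u t) y) (v t) * deriv v t) t := by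
  have hdf : Differentiable ℝ (Function.uncurry f) := hf.differentiable two_ne_zero
  have hfd : HasFDerivAt (Function.uncurry f) (fderiv ℝ (Function.uncurry f) (u t, v t))
      (u t, v t) := (hdf (u t, v t)).hasFDerivAt
  set L := fderiv ℝ (Function.uncurry f) (u t, v t) with hLdef
  have huv : HasDerivAt (fun s => (u s, v s)) (deriv u t, deriv v t) t :=
    ((hu t).hasDerivAt).prodMk ((hv t).hasDerivAt)
  have hcomp : HasDerivAt (fun s => f (u s) (v s)) (L (deriv u t, deriv v t)) t :=
    by have := hfd.comp_hasDerivAt t huv; exact this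
  have ha : HasDerivAt (fun x => f x (v t)) (L (1, 0)) (u t) :=
    by have := hfd.comp_hasDerivAt (u t) ((hasDerivAt_id (u t)).prodMk (hasDerivAt_const (u t) (v t))); exact this
  have hb : HasDerivAt (fun y => f (u t) y) (L (0, 1)) (v t) :=
    by have := hfd.comp_hasDerivAt (v t) ((hasDerivAt_const (v t) (u t)).prodMk (hasDerivAt_id (v t))); exact this
  have hval : L (deriv u t, deriv v t)
      = deriv (fun x => f x (v t)) (u t) * deriv u t
        + deriv (fun y => f (u t) y) (v t) * deriv v t := by
    rw [ha.deriv, hb.deriv]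
    have h : (deriv u t, deriv v t)
        = deriv u t • ((1:ℝ), (0:ℝ)) + deriv v t • ((0:ℝ), (1:ℝ)) := by simp
    rw [h, map_add, map_smul, map_smul, smul_eq_mul, smul_eq_mul]; ring
  rw [← hval]; exact hcomp

private lemma speedSG_pos (r : ℝ) (u v : ℝ → ℝ) (t : ℝ)
    (hreg : (deriv u t, deriv v t) ≠ (0, 0)) : 0 < speedSG r u v t := by
  apply Real.sqrt_pos.mpr
  rcases eq_or_ne (deriv u t) 0 with h | h
  · have hq : deriv v t ≠ 0 := by
      intro hq; exact hreg (by rw [h, hq])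
    have : 0 < (Real.cosh (u t / r)) ^ 2 * (deriv v t) ^ 2 := by positivity
    nlinarith [sq_nonneg (deriv u t)]
  · nlinarith [sq_nonneg (deriv u t), sq_nonneg (Real.cosh (u t / r) * deriv v t),
      pow_pos (abs_pos.mpr h) 2, sq_abs (deriv u t)]

private lemma speedSG_sq (r : ℝ) (u v : ℝ → ℝ) (t : ℝ) :
    (speedSG r u v t) ^ 2 = (deriv u t) ^ 2 + (Real.cosh (u t / r)) ^ 2 * (deriv v t) ^ 2 := by
  apply Real.sq_sqrt; positivity

private lemma cosh_hasDerivAt (r : ℝ) (u : ℝ → ℝ) (hu : Differentiable ℝ u) (t : ℝ) :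
    HasDerivAt (fun s => Real.cosh (u s / r)) (Real.sinh (u t / r) * (deriv u t / r)) t :=
  ((hu t).hasDerivAt.div_const r).cosh

private lemma sinh_hasDerivAt (r : ℝ) (u : ℝ → ℝ) (hu : Differentiable ℝ u) (t : ℝ) :
    HasDerivAt (fun s => Real.sinh (u s / r)) (Real.cosh (u t / r) * (deriv u t / r)) t :=
  ((hu t).hasDerivAt.div_const r).sinh

private lemma speedSG_hasDerivAt (r : ℝ) (u v : ℝ → ℝ)
    (hu : Differentiable ℝ u) (hu2 : Differentiable ℝ (deriv u))
    (hv : Differentiable ℝ v) (hv2 : Differentiable ℝ (deriv v)) (t : ℝ)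
    (hreg : (deriv u t, deriv v t) ≠ (0, 0)) :
    HasDerivAt (speedSG r u v)
      ((deriv u t * deriv (deriv u) t
          + Real.cosh (u t / r) * Real.sinh (u t / r) * deriv u t * deriv v t ^ 2 / r
          + Real.cosh (u t / r) ^ 2 * deriv v t * deriv (deriv v) t) / speedSG r u v t) t := by
  have hpos := speedSG_pos r u v t hreg
  have hinnerpos : 0 < (deriv u t) ^ 2 + (Real.cosh (u t / r)) ^ 2 * (deriv v t) ^ 2 := by
    have := speedSG_sq r u v t; nlinarith
  have hinner : HasDerivAt
      (fun s => (deriv u s) ^ 2 + (Real.cosh (u s / r)) ^ 2 * (deriv v s) ^ 2)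
      (2 * deriv u t * deriv (deriv u) t
        + ((2 * Real.cosh (u t / r) * (Real.sinh (u t / r) * (deriv u t / r))) * (deriv v t) ^ 2
            + (Real.cosh (u t / r)) ^ 2 * (2 * deriv v t * deriv (deriv v) t))) t := by
    have h1 : HasDerivAt (fun s => (deriv u s) ^ 2) (2 * deriv u t * deriv (deriv u) t) t := by
      simpa using ((hu2 t).hasDerivAt.fun_pow 2)
    have h2 : HasDerivAt (fun s => (Real.cosh (u s / r)) ^ 2)
        (2 * Real.cosh (u t / r) * (Real.sinh (u t / r) * (deriv u t / r))) t := by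
      simpa using ((cosh_hasDerivAt r u hu t).fun_pow 2)
    have h3 : HasDerivAt (fun s => (deriv v s) ^ 2) (2 * deriv v t * deriv (deriv v) t) t := by
      simpa using ((hv2 t).hasDerivAt.fun_pow 2)
    exact h1.add (h2.mul h3)
  have := hinner.sqrt (ne_of_gt hinnerpos)
  have hsq : Real.sqrt ((deriv u t) ^ 2 + (Real.cosh (u t / r)) ^ 2 * (deriv v t) ^ 2)
      = speedSG r u v t := rfl
  convert this using 1
  · rfl
  rw [hsq]
  field_simp
  ring
private lemma deriv_D1 (r : ℝ) (f : ℝ → ℝ → ℝ) (hf : ContDiff ℝ 2 (Function.uncurry f))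
    (u v : ℝ → ℝ)
    (hu : Differentiable ℝ u) (hu2 : Differentiable ℝ (deriv u))
    (hv : Differentiable ℝ v) (hv2 : Differentiable ℝ (deriv v)) (t : ℝ)
    (hreg : (deriv u t, deriv v t) ≠ (0, 0)) :
    deriv (fun s => f (u s) (v s) * deriv u s / speedSG r u v s) t
      = ((deriv (fun x => f x (v t)) (u t) * deriv u t
            + deriv (fun y => f (u t) y) (v t) * deriv v t) * deriv u t
          + f (u t) (v t) * deriv (deriv u) t) / speedSG r u v t
        - f (u t) (v t) * deriv u t
            * (deriv u t * deriv (deriv u) t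
                + Real.cosh (u t / r) * Real.sinh (u t / r) * deriv u t * deriv v t ^ 2 / r
                + Real.cosh (u t / r) ^ 2 * deriv v t * deriv (deriv v) t)
            / (speedSG r u v t) ^ 3 := by
  have hw := speedSG_pos r u v t hreg
  have hnum : HasDerivAt (fun s => f (u s) (v s) * deriv u s)
      ((deriv (fun x => f x (v t)) (u t) * deriv u t
          + deriv (fun y => f (u t) y) (v t) * deriv v t) * deriv u t
        + f (u t) (v t) * deriv (deriv u) t) t :=
    (fcomp_hasDerivAt f hf u v hu hv t).mul (hu2 t).hasDerivAt
  have h := (hnum.fun_div (speedSG_hasDerivAt r u v hu hu2 hv hv2 t hreg) (ne_of_gt hw)).deriv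
  rw [h]
  field_simp

private lemma deriv_D2 (r : ℝ) (f : ℝ → ℝ → ℝ) (hf : ContDiff ℝ 2 (Function.uncurry f))
    (u v : ℝ → ℝ)
    (hu : Differentiable ℝ u) (hu2 : Differentiable ℝ (deriv u))
    (hv : Differentiable ℝ v) (hv2 : Differentiable ℝ (deriv v)) (t : ℝ)
    (hreg : (deriv u t, deriv v t) ≠ (0, 0)) :
    deriv (fun s => f (u s) (v s) * deriv v s * (Real.cosh (u s / r)) ^ 2 / speedSG r u v s) t
      = ((deriv (fun x => f x (v t)) (u t) * deriv u t
            + deriv (fun y => f (u t) y) (v t) * deriv v t) * deriv v t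
              * Real.cosh (u t / r) ^ 2
          + f (u t) (v t) * deriv (deriv v) t * Real.cosh (u t / r) ^ 2
          + 2 * f (u t) (v t) * deriv v t * Real.cosh (u t / r) * Real.sinh (u t / r)
              * deriv u t / r) / speedSG r u v t
        - f (u t) (v t) * deriv v t * Real.cosh (u t / r) ^ 2
            * (deriv u t * deriv (deriv u) t
                + Real.cosh (u t / r) * Real.sinh (u t / r) * deriv u t * deriv v t ^ 2 / r
                + Real.cosh (u t / r) ^ 2 * deriv v t * deriv (deriv v) t)
            / (speedSG r u v t) ^ 3 := by
  have hw := speedSG_pos r u v t hreg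
  have hsq : HasDerivAt (fun s => (Real.cosh (u s / r)) ^ 2)
      (2 * Real.cosh (u t / r) * (Real.sinh (u t / r) * (deriv u t / r))) t := by
    simpa using ((cosh_hasDerivAt r u hu t).fun_pow 2)
  have hnum : HasDerivAt (fun s => f (u s) (v s) * deriv v s * (Real.cosh (u s / r)) ^ 2)
      (((deriv (fun x => f x (v t)) (u t) * deriv u t
          + deriv (fun y => f (u t) y) (v t) * deriv v t) * deriv v t
        + f (u t) (v t) * deriv (deriv v) t) * (Real.cosh (u t / r)) ^ 2
        + (f (u t) (v t) * deriv v t)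
            * (2 * Real.cosh (u t / r) * (Real.sinh (u t / r) * (deriv u t / r)))) t :=
    ((fcomp_hasDerivAt f hf u v hu hv t).mul (hv2 t).hasDerivAt).mul hsq
  have h := (hnum.fun_div (speedSG_hasDerivAt r u v hu hu2 hv hv2 t hreg) (ne_of_gt hw)).deriv
  rw [h]
  field_simp
private lemma deriv_gX (r : ℝ) (hr : 0 < r) (u v : ℝ → ℝ)
    (hu : Differentiable ℝ u) (hv : Differentiable ℝ v) :
    deriv (gX r u v) = fun s => Real.sinh (u s / r) * deriv u s * Real.cosh (v s / r)
      + Real.cosh (u s / r) * Real.sinh (v s / r) * deriv v s := by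
  funext s
  have h : HasDerivAt (gX r u v)
      ((r * (Real.sinh (u s / r) * (deriv u s / r))) * Real.cosh (v s / r)
        + (r * Real.cosh (u s / r)) * (Real.sinh (v s / r) * (deriv v s / r))) s :=
    ((cosh_hasDerivAt r u hu s).const_mul r).mul (cosh_hasDerivAt r v hv s)
  rw [h.deriv]; field_simp

private lemma deriv_gY (r : ℝ) (hr : 0 < r) (u v : ℝ → ℝ)
    (hu : Differentiable ℝ u) (hv : Differentiable ℝ v) :
    deriv (gY r u v) = fun s => Real.sinh (u s / r) * deriv u s * Real.sinh (v s / r)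
      + Real.cosh (u s / r) * Real.cosh (v s / r) * deriv v s := by
  funext s
  have h : HasDerivAt (gY r u v)
      ((r * (Real.sinh (u s / r) * (deriv u s / r))) * Real.sinh (v s / r)
        + (r * Real.cosh (u s / r)) * (Real.cosh (v s / r) * (deriv v s / r))) s :=
    ((cosh_hasDerivAt r u hu s).const_mul r).mul (sinh_hasDerivAt r v hv s)
  rw [h.deriv]; field_simp

private lemma deriv_gZ (r : ℝ) (hr : 0 < r) (u v : ℝ → ℝ)
    (hu : Differentiable ℝ u) :
    deriv (gZ r u v) = fun s => Real.cosh (u s / r) * deriv u s := by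
  funext s
  have h : HasDerivAt (gZ r u v) (r * (Real.cosh (u s / r) * (deriv u s / r))) s :=
    (sinh_hasDerivAt r u hu s).const_mul r
  rw [h.deriv]; field_simp

private lemma deriv2_gX (r : ℝ) (hr : 0 < r) (u v : ℝ → ℝ)
    (hu : Differentiable ℝ u) (hu2 : Differentiable ℝ (deriv u))
    (hv : Differentiable ℝ v) (hv2 : Differentiable ℝ (deriv v)) (t : ℝ) :
    deriv (deriv (gX r u v)) t
      = Real.cosh (u t / r) * (deriv u t) ^ 2 * Real.cosh (v t / r) / r
        + Real.sinh (u t / r) * deriv (deriv u) t * Real.cosh (v t / r)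
        + 2 * Real.sinh (u t / r) * deriv u t * Real.sinh (v t / r) * deriv v t / r
        + Real.cosh (u t / r) * Real.cosh (v t / r) * (deriv v t) ^ 2 / r
        + Real.cosh (u t / r) * Real.sinh (v t / r) * deriv (deriv v) t := by
  rw [deriv_gX r hr u v hu hv]
  have h : HasDerivAt (fun s => Real.sinh (u s / r) * deriv u s * Real.cosh (v s / r)
      + Real.cosh (u s / r) * Real.sinh (v s / r) * deriv v s)
      (((Real.cosh (u t / r) * (deriv u t / r)) * deriv u t
          + Real.sinh (u t / r) * deriv (deriv u) t) * Real.cosh (v t / r)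
        + (Real.sinh (u t / r) * deriv u t) * (Real.sinh (v t / r) * (deriv v t / r))
        + (((Real.sinh (u t / r) * (deriv u t / r)) * Real.sinh (v t / r)
            + Real.cosh (u t / r) * (Real.cosh (v t / r) * (deriv v t / r))) * deriv v t
          + (Real.cosh (u t / r) * Real.sinh (v t / r)) * deriv (deriv v) t)) t :=
    (((sinh_hasDerivAt r u hu t).mul (hu2 t).hasDerivAt).mul (cosh_hasDerivAt r v hv t)).add
      (((cosh_hasDerivAt r u hu t).mul (sinh_hasDerivAt r v hv t)).mul (hv2 t).hasDerivAt)
  rw [h.deriv]; field_simp; ring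

private lemma deriv2_gY (r : ℝ) (hr : 0 < r) (u v : ℝ → ℝ)
    (hu : Differentiable ℝ u) (hu2 : Differentiable ℝ (deriv u))
    (hv : Differentiable ℝ v) (hv2 : Differentiable ℝ (deriv v)) (t : ℝ) :
    deriv (deriv (gY r u v)) t
      = Real.cosh (u t / r) * (deriv u t) ^ 2 * Real.sinh (v t / r) / r
        + Real.sinh (u t / r) * deriv (deriv u) t * Real.sinh (v t / r)
        + 2 * Real.sinh (u t / r) * deriv u t * Real.cosh (v t / r) * deriv v t / r
        + Real.cosh (u t / r) * Real.sinh (v t / r) * (deriv v t) ^ 2 / r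
        + Real.cosh (u t / r) * Real.cosh (v t / r) * deriv (deriv v) t := by
  rw [deriv_gY r hr u v hu hv]
  have h : HasDerivAt (fun s => Real.sinh (u s / r) * deriv u s * Real.sinh (v s / r)
      + Real.cosh (u s / r) * Real.cosh (v s / r) * deriv v s)
      (((Real.cosh (u t / r) * (deriv u t / r)) * deriv u t
          + Real.sinh (u t / r) * deriv (deriv u) t) * Real.sinh (v t / r)
        + (Real.sinh (u t / r) * deriv u t) * (Real.cosh (v t / r) * (deriv v t / r))
        + (((Real.sinh (u t / r) * (deriv u t / r)) * Real.cosh (v t / r)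
            + Real.cosh (u t / r) * (Real.sinh (v t / r) * (deriv v t / r))) * deriv v t
          + (Real.cosh (u t / r) * Real.cosh (v t / r)) * deriv (deriv v) t)) t :=
    (((sinh_hasDerivAt r u hu t).mul (hu2 t).hasDerivAt).mul (sinh_hasDerivAt r v hv t)).add
      (((cosh_hasDerivAt r u hu t).mul (cosh_hasDerivAt r v hv t)).mul (hv2 t).hasDerivAt)
  rw [h.deriv]; field_simp; ring

private lemma deriv2_gZ (r : ℝ) (hr : 0 < r) (u v : ℝ → ℝ)
    (hu : Differentiable ℝ u) (hu2 : Differentiable ℝ (deriv u)) (t : ℝ) :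
    deriv (deriv (gZ r u v)) t
      = Real.sinh (u t / r) * (deriv u t) ^ 2 / r + Real.cosh (u t / r) * deriv (deriv u) t := by
  rw [deriv_gZ r hr u v hu]
  have h : HasDerivAt (fun s => Real.cosh (u s / r) * deriv u s)
      ((Real.sinh (u t / r) * (deriv u t / r)) * deriv u t
        + Real.cosh (u t / r) * deriv (deriv u) t) t :=
    (cosh_hasDerivAt r u hu t).mul (hu2 t).hasDerivAt
  rw [h.deriv]; field_simp
private lemma speed3_eq (r : ℝ) (hr : 0 < r) (u v : ℝ → ℝ)
    (hu : Differentiable ℝ u) (hv : Differentiable ℝ v) (t : ℝ) :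
    speed3 (gX r u v) (gY r u v) (gZ r u v) t = speedSG r u v t := by
  have hcu : Real.cosh (u t / r) ^ 2 - Real.sinh (u t / r) ^ 2 = 1 :=
    Real.cosh_sq_sub_sinh_sq _
  have hcv : Real.cosh (v t / r) ^ 2 - Real.sinh (v t / r) ^ 2 = 1 :=
    Real.cosh_sq_sub_sinh_sq _
  simp only [speed3, speedSG, deriv_gX r hr u v hu hv, deriv_gY r hr u v hu hv,
    deriv_gZ r hr u v hu]
  congr 1
  linear_combination (Real.cosh (u t / r) ^ 2 * (deriv v t) ^ 2
      - Real.sinh (u t / r) ^ 2 * (deriv u t) ^ 2) * hcv + (deriv u t) ^ 2 * hcu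

private lemma kappa_eq (r : ℝ) (hr : 0 < r) (u v : ℝ → ℝ)
    (hu : Differentiable ℝ u) (hu2 : Differentiable ℝ (deriv u))
    (hv : Differentiable ℝ v) (hv2 : Differentiable ℝ (deriv v)) (t : ℝ)
    (hreg : (deriv u t, deriv v t) ≠ (0, 0)) :
    kappaSG r u v t
      = (Real.cosh (u t / r) * (deriv (deriv u) t * deriv v t - deriv u t * deriv (deriv v) t) * r
          - Real.sinh (u t / r) * (2 * (deriv u t) ^ 2 * deriv v t
              + Real.cosh (u t / r) ^ 2 * (deriv v t) ^ 3))
        / (r * (speedSG r u v t) ^ 3) := by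
  have hw := speedSG_pos r u v t hreg
  have hcu : Real.cosh (u t / r) ^ 2 - Real.sinh (u t / r) ^ 2 = 1 :=
    Real.cosh_sq_sub_sinh_sq _
  have hcv : Real.cosh (v t / r) ^ 2 - Real.sinh (v t / r) ^ 2 = 1 :=
    Real.cosh_sq_sub_sinh_sq _
  simp only [kappaSG, kappaH2, speed3_eq r hr u v hu hv t, gX, gY, gZ]
  rw [deriv2_gX r hr u v hu hu2 hv hv2 t, deriv2_gY r hr u v hu hu2 hv hv2 t,
    deriv2_gZ r hr u v hu hu2 t]
  simp only [deriv_gX r hr u v hu hv, deriv_gY r hr u v hu hv, deriv_gZ r hr u v hu]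
  congr 1
  field_simp
  linear_combination (-(deriv v t * deriv (deriv u) t * Real.cosh (u t / r) * Real.sinh (u t / r) ^ 2 * r) + deriv v t * deriv (deriv u) t * Real.cosh (u t / r) ^ 3 * r - deriv v t ^ 3 * Real.cosh (u t / r) ^ 2 * Real.sinh (u t / r) + deriv u t * deriv (deriv v) t * Real.cosh (u t / r) * Real.sinh (u t / r) ^ 2 * r - deriv u t * deriv (deriv v) t * Real.cosh (u t / r) ^ 3 * r + 2 * deriv u t ^ 2 * deriv v t * Real.sinh (u t / r) ^ 3 - 2 * deriv u t ^ 2 * deriv v t * Real.cosh (u t / r) ^ 2 * Real.sinh (u t / r)) * hcv + (deriv v t * deriv (deriv u) t * Real.cosh (u t / r) * r - deriv u t * deriv (deriv v) t * Real.cosh (u t / r) * r - 2 * deriv u t ^ 2 * deriv v t * Real.sinh (u t / r)) * hcu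

/-- Euler–Lagrange equations of `∫ f(u,v)‖γ̇‖ dt` iff the prescribed
curvature equation holds. -/
theorem eulerLagrange_iff_curvature (r : ℝ) (hr : 0 < r) (f : ℝ → ℝ → ℝ)
    (hf : ContDiff ℝ 2 (Function.uncurry f)) (hfpos : ∀ a b : ℝ, 0 < f a b)
    (u v : ℝ → ℝ)
    (hu : Differentiable ℝ u) (hu2 : Differentiable ℝ (deriv u))
    (hv : Differentiable ℝ v) (hv2 : Differentiable ℝ (deriv v))
    (hreg : ∀ t : ℝ, (deriv u t, deriv v t) ≠ (0, 0)) :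
    EulerLagrange r f u v ↔
      ∀ t : ℝ,
        kappaSG r u v t
          = 1 / (f (u t) (v t) * speedSG r u v t)
            * (deriv v t * deriv (fun a => f a (v t)) (u t) * Real.cosh (u t / r)
              - deriv u t * deriv (fun b => f (u t) b) (v t) / Real.cosh (u t / r)) := by
  simp only [EulerLagrange]
  refine forall_congr' fun t => ?_
  have hregt := hreg t
  rw [deriv_D1 r f hf u v hu hu2 hv hv2 t hregt, deriv_D2 r f hf u v hu hu2 hv hv2 t hregt,
    kappa_eq r hr u v hu hu2 hv hv2 t hregt]
  exact mainAlg r (deriv u t) (deriv v t) (deriv (deriv u) t) (deriv (deriv v) t)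
    (Real.cosh (u t / r)) (Real.sinh (u t / r)) (f (u t) (v t))
    (deriv (fun x => f x (v t)) (u t)) (deriv (fun y => f (u t) y) (v t))
    (speedSG r u v t) hr.ne' (hfpos _ _).ne' (speedSG_pos r u v t hregt).ne'
    (Real.cosh_pos _).ne' (speedSG_sq r u v t)
end
end

section
/- Let r > 0 and let u, v : ℝ → ℝ be twice differentiable with (u̇(t), v̇(t)) ≠ (0,0) for all t. Then γ(t) = ψ(u(t), v(t)) is an extrinsic catenary of hyperbolic type (i.e., satisfies the Euler–Lagrange equations of ∫ f(u,v)‖γ̇‖ dt with f(u,v) = cosh(u/r)cosh(v/r)) if and only if its geodesic curvature κ in H²(r) satisfies κ = (1/(r‖γ̇‖))·(−u̇ sinh(v/r)/(cosh(u/r)cosh(v/r)) + v̇ sinh(u/r)) for all t. -/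
noncomputable section
open Real

private lemma aux_iff {a b d n : ℝ} (hd : d ≠ 0) (h : (a - b) * d = n) : a = b ↔ n = 0 := by
  constructor
  · intro h'
    rw [← h, h']
    ring
  · intro h'
    rcases mul_eq_zero.1 (h.trans h') with h2 | h2
    · exact sub_eq_zero.1 h2
    · exact absurd h2 hd

set_option maxHeartbeats 2000000 in
/-- extrinsic catenaries of hyperbolic type. -/
theorem extrinsic_catenary_hyperbolic_iff (r : ℝ) (hr : 0 < r) (u v : ℝ → ℝ)
    (hu : Differentiable ℝ u) (hu2 : Differentiable ℝ (deriv u))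
    (hv : Differentiable ℝ v) (hv2 : Differentiable ℝ (deriv v))
    (hreg : ∀ t : ℝ, (deriv u t, deriv v t) ≠ (0, 0)) :
    EulerLagrange r (fun a b => Real.cosh (a / r) * Real.cosh (b / r)) u v ↔
      ∀ t : ℝ,
        kappaSG r u v t
          = 1 / (r * speedSG r u v t)
            * (-(deriv u t * Real.sinh (v t / r)
                  / (Real.cosh (u t / r) * Real.cosh (v t / r)))
              + deriv v t * Real.sinh (u t / r)) := by
  have hr0 : r ≠ 0 := ne_of_gt hr
  -- function-level first derivatives of the coordinates
  have hDX : deriv (gX r u v) = fun x =>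
      Real.sinh (u x / r) * Real.cosh (v x / r) * deriv u x
        + Real.cosh (u x / r) * Real.sinh (v x / r) * deriv v x := by
    funext x
    have h1 : HasDerivAt (fun y => u y / r) (deriv u x / r) x := ((hu x).hasDerivAt).div_const r
    have h2 : HasDerivAt (fun y => v y / r) (deriv v x / r) x := ((hv x).hasDerivAt).div_const r
    have h : HasDerivAt (gX r u v)
        (r * (Real.sinh (u x / r) * (deriv u x / r)) * Real.cosh (v x / r)
          + r * Real.cosh (u x / r) * (Real.sinh (v x / r) * (deriv v x / r))) x :=
      (h1.cosh.const_mul r).mul h2.cosh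
    rw [h.deriv]; field_simp
  have hDY : deriv (gY r u v) = fun x =>
      Real.sinh (u x / r) * Real.sinh (v x / r) * deriv u x
        + Real.cosh (u x / r) * Real.cosh (v x / r) * deriv v x := by
    funext x
    have h1 : HasDerivAt (fun y => u y / r) (deriv u x / r) x := ((hu x).hasDerivAt).div_const r
    have h2 : HasDerivAt (fun y => v y / r) (deriv v x / r) x := ((hv x).hasDerivAt).div_const r
    have h : HasDerivAt (gY r u v)
        (r * (Real.sinh (u x / r) * (deriv u x / r)) * Real.sinh (v x / r)
          + r * Real.cosh (u x / r) * (Real.cosh (v x / r) * (deriv v x / r))) x :=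
      (h1.cosh.const_mul r).mul h2.sinh
    rw [h.deriv]; field_simp
  have hDZ : deriv (gZ r u v) = fun x => Real.cosh (u x / r) * deriv u x := by
    funext x
    have h1 : HasDerivAt (fun y => u y / r) (deriv u x / r) x := ((hu x).hasDerivAt).div_const r
    have h : HasDerivAt (gZ r u v) (r * (Real.cosh (u x / r) * (deriv u x / r))) x :=
      h1.sinh.const_mul r
    rw [h.deriv]; field_simp
  have key : ∀ t : ℝ,
      ((deriv (fun a => Real.cosh (a / r) * Real.cosh (v t / r)) (u t) * speedSG r u v t
          + Real.cosh (u t / r) * Real.cosh (v t / r) * Real.sinh (u t / r)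
              * Real.cosh (u t / r) * deriv v t ^ 2 / (r * speedSG r u v t)
        = deriv (fun s => Real.cosh (u s / r) * Real.cosh (v s / r) * deriv u s
            / speedSG r u v s) t
      ∧ deriv (fun b => Real.cosh (u t / r) * Real.cosh (b / r)) (v t) * speedSG r u v t
        = deriv (fun s => Real.cosh (u s / r) * Real.cosh (v s / r) * deriv v s
            * Real.cosh (u s / r) ^ 2 / speedSG r u v s) t)
      ↔ kappaSG r u v t
          = 1 / (r * speedSG r u v t)
            * (-(deriv u t * Real.sinh (v t / r)
                  / (Real.cosh (u t / r) * Real.cosh (v t / r)))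
              + deriv v t * Real.sinh (u t / r))) := by
    intro t
    have hregt := hreg t
    have h1 : HasDerivAt (fun y => u y / r) (deriv u t / r) t := ((hu t).hasDerivAt).div_const r
    have h2 : HasDerivAt (fun y => v y / r) (deriv v t / r) t := ((hv t).hasDerivAt).div_const r
    have hdu2t : HasDerivAt (deriv u) (deriv (deriv u) t) t := (hu2 t).hasDerivAt
    have hdv2t : HasDerivAt (deriv v) (deriv (deriv v) t) t := (hv2 t).hasDerivAt
    have hm : 0 < deriv u t ^ 2 + Real.cosh (u t / r) ^ 2 * deriv v t ^ 2 := by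
      rcases eq_or_ne (deriv u t) 0 with hp | hp
      · have hq : deriv v t ≠ 0 := fun hq => hregt (by rw [hp, hq])
        have hpos : 0 < Real.cosh (u t / r) := Real.cosh_pos _
        have h1 : 0 < Real.cosh (u t / r) ^ 2 * deriv v t ^ 2 := by positivity
        nlinarith [sq_nonneg (deriv u t)]
      · have h1 : 0 < deriv u t ^ 2 := lt_of_le_of_ne (sq_nonneg _) (Ne.symm (pow_ne_zero 2 hp))
        nlinarith [mul_nonneg (sq_nonneg (Real.cosh (u t / r))) (sq_nonneg (deriv v t))]
    have hwdef : speedSG r u v t = Real.sqrt (deriv u t ^ 2 + Real.cosh (u t / r) ^ 2 * deriv v t ^ 2) := rfl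
    have hwpos : 0 < speedSG r u v t := by rw [hwdef]; exact Real.sqrt_pos.2 hm
    have hw0 : speedSG r u v t ≠ 0 := ne_of_gt hwpos
    have hw2 : speedSG r u v t ^ 2 = deriv u t ^ 2 + Real.cosh (u t / r) ^ 2 * deriv v t ^ 2 := by
      rw [hwdef]; exact Real.sq_sqrt hm.le
    have hc2 : Real.cosh (u t / r) ^ 2 = Real.sinh (u t / r) ^ 2 + 1 := Real.cosh_sq (u t / r)
    have hC2 : Real.cosh (v t / r) ^ 2 = Real.sinh (v t / r) ^ 2 + 1 := Real.cosh_sq (v t / r)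
    have hcupos : 0 < Real.cosh (u t / r) := Real.cosh_pos _
    have hcvpos : 0 < Real.cosh (v t / r) := Real.cosh_pos _
    have hsq0 : Real.sqrt (deriv u t ^ 2 + Real.cosh (u t / r) ^ 2 * deriv v t ^ 2) ≠ 0 := by
      rw [← hwdef]; exact hw0
    have hin : HasDerivAt (fun x => deriv u x ^ 2 + Real.cosh (u x / r) ^ 2 * deriv v x ^ 2) _ t :=
      (hdu2t.pow 2).add ((h1.cosh.pow 2).mul (hdv2t.pow 2))
    have hsq := hin.sqrt (ne_of_gt hm)
    have hfa : deriv (fun a => Real.cosh (a / r) * Real.cosh (v t / r)) (u t)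
        = Real.sinh (u t / r) * Real.cosh (v t / r) / r := by
      have h : HasDerivAt (fun a => Real.cosh (a / r) * Real.cosh (v t / r))
          (Real.sinh (u t / r) * (1 / r) * Real.cosh (v t / r)) (u t) :=
        (((hasDerivAt_id' (u t)).div_const r).cosh).mul_const _
      rw [h.deriv]; ring
    have hfb : deriv (fun b => Real.cosh (u t / r) * Real.cosh (b / r)) (v t)
        = Real.cosh (u t / r) * Real.sinh (v t / r) / r := by
      have h : HasDerivAt (fun b => Real.cosh (u t / r) * Real.cosh (b / r))
          (Real.cosh (u t / r) * (Real.sinh (v t / r) * (1 / r))) (v t) :=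
        (((hasDerivAt_id' (v t)).div_const r).cosh).const_mul _
      rw [h.deriv]; ring
    have hphi1 : deriv (fun s => Real.cosh (u s / r) * Real.cosh (v s / r) * deriv u s
        / speedSG r u v s) t
        = (((Real.sinh (u t / r) * Real.cosh (v t / r) * deriv u t + Real.cosh (u t / r) * Real.sinh (v t / r) * deriv v t) / r * deriv u t + Real.cosh (u t / r) * Real.cosh (v t / r) * deriv (deriv u) t) * speedSG r u v t
            - Real.cosh (u t / r) * Real.cosh (v t / r) * deriv u t * ((deriv u t * deriv (deriv u) t + Real.sinh (u t / r) * Real.cosh (u t / r) * deriv u t * deriv v t ^ 2 / r + Real.cosh (u t / r) ^ 2 * deriv v t * deriv (deriv v) t) / speedSG r u v t))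
          / speedSG r u v t ^ 2 := by
      have hnum := (h1.cosh.mul h2.cosh).mul hdu2t
      have hphi : HasDerivAt (fun s => Real.cosh (u s / r) * Real.cosh (v s / r) * deriv u s
          / speedSG r u v s) _ t := hnum.div hsq hsq0
      rw [hphi.deriv, ← hwdef]
      push_cast
      simp only [Pi.mul_apply, Pi.pow_apply]
      field_simp
      ring
    have hphi2 : deriv (fun s => Real.cosh (u s / r) * Real.cosh (v s / r) * deriv v s
        * Real.cosh (u s / r) ^ 2 / speedSG r u v s) t
        = ((((Real.sinh (u t / r) * Real.cosh (v t / r) * deriv u t + Real.cosh (u t / r) * Real.sinh (v t / r) * deriv v t) / r * deriv v t + Real.cosh (u t / r) * Real.cosh (v t / r) * deriv (deriv v) t) * Real.cosh (u t / r) ^ 2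
              + Real.cosh (u t / r) * Real.cosh (v t / r) * deriv v t * (2 * Real.cosh (u t / r) * Real.sinh (u t / r) * deriv u t / r)) * speedSG r u v t
            - Real.cosh (u t / r) * Real.cosh (v t / r) * deriv v t * Real.cosh (u t / r) ^ 2
                * ((deriv u t * deriv (deriv u) t + Real.sinh (u t / r) * Real.cosh (u t / r) * deriv u t * deriv v t ^ 2 / r + Real.cosh (u t / r) ^ 2 * deriv v t * deriv (deriv v) t) / speedSG r u v t))
          / speedSG r u v t ^ 2 := by
      have hnum := (((h1.cosh.mul h2.cosh).mul hdv2t).mul (h1.cosh.pow 2))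
      have hphi : HasDerivAt (fun s => Real.cosh (u s / r) * Real.cosh (v s / r) * deriv v s
          * Real.cosh (u s / r) ^ 2 / speedSG r u v s) _ t := hnum.div hsq hsq0
      rw [hphi.deriv, ← hwdef]
      push_cast
      simp only [Pi.mul_apply, Pi.pow_apply]
      field_simp
      ring
    have hgX2 : deriv (fun x =>
        Real.sinh (u x / r) * Real.cosh (v x / r) * deriv u x
          + Real.cosh (u x / r) * Real.sinh (v x / r) * deriv v x) t
        = (Real.cosh (u t / r) * Real.cosh (v t / r) * deriv u t ^ 2 + 2 * Real.sinh (u t / r) * Real.sinh (v t / r) * deriv u t * deriv v t + Real.cosh (u t / r) * Real.cosh (v t / r) * deriv v t ^ 2) / r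
            + Real.sinh (u t / r) * Real.cosh (v t / r) * deriv (deriv u) t + Real.cosh (u t / r) * Real.sinh (v t / r) * deriv (deriv v) t := by
      have h : HasDerivAt (fun x =>
          Real.sinh (u x / r) * Real.cosh (v x / r) * deriv u x
            + Real.cosh (u x / r) * Real.sinh (v x / r) * deriv v x) _ t :=
        ((h1.sinh.mul h2.cosh).mul hdu2t).add ((h1.cosh.mul h2.sinh).mul hdv2t)
      rw [h.deriv]; simp only [Pi.mul_apply, Pi.pow_apply]; ring
    have hgY2 : deriv (fun x =>
        Real.sinh (u x / r) * Real.sinh (v x / r) * deriv u x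
          + Real.cosh (u x / r) * Real.cosh (v x / r) * deriv v x) t
        = (Real.cosh (u t / r) * Real.sinh (v t / r) * deriv u t ^ 2 + 2 * Real.sinh (u t / r) * Real.cosh (v t / r) * deriv u t * deriv v t + Real.cosh (u t / r) * Real.sinh (v t / r) * deriv v t ^ 2) / r
            + Real.sinh (u t / r) * Real.sinh (v t / r) * deriv (deriv u) t + Real.cosh (u t / r) * Real.cosh (v t / r) * deriv (deriv v) t := by
      have h : HasDerivAt (fun x =>
          Real.sinh (u x / r) * Real.sinh (v x / r) * deriv u x
            + Real.cosh (u x / r) * Real.cosh (v x / r) * deriv v x) _ t :=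
        ((h1.sinh.mul h2.sinh).mul hdu2t).add ((h1.cosh.mul h2.cosh).mul hdv2t)
      rw [h.deriv]; simp only [Pi.mul_apply, Pi.pow_apply]; ring
    have hgZ2 : deriv (fun x => Real.cosh (u x / r) * deriv u x) t
        = Real.sinh (u t / r) * deriv u t ^ 2 / r + Real.cosh (u t / r) * deriv (deriv u) t := by
      have h : HasDerivAt (fun x => Real.cosh (u x / r) * deriv u x) _ t :=
        h1.cosh.mul hdu2t
      rw [h.deriv]; field_simp
    have hsqarg : -(Real.sinh (u t / r) * Real.cosh (v t / r) * deriv u t + Real.cosh (u t / r) * Real.sinh (v t / r) * deriv v t) ^ 2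
          + (Real.sinh (u t / r) * Real.sinh (v t / r) * deriv u t + Real.cosh (u t / r) * Real.cosh (v t / r) * deriv v t) ^ 2 + (Real.cosh (u t / r) * deriv u t) ^ 2
        = deriv u t ^ 2 + Real.cosh (u t / r) ^ 2 * deriv v t ^ 2 := by
      linear_combination (deriv u t ^ 2) * hc2 + (Real.cosh (u t / r) ^ 2 * deriv v t ^ 2 - Real.sinh (u t / r) ^ 2 * deriv u t ^ 2) * hC2
    simp only [kappaSG, kappaH2, speed3, hDX, hDY, hDZ]
    simp only [gX, gY, gZ]
    rw [hgX2, hgY2, hgZ2, hsqarg, ← hwdef, hfa, hfb, hphi1, hphi2]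
    set cu := Real.cosh (u t / r) with hcu
    set su := Real.sinh (u t / r) with hsu
    set cv := Real.cosh (v t / r) with hcv
    set sv := Real.sinh (v t / r) with hsv
    set p := deriv u t with hp
    set q := deriv v t with hq
    set P := deriv (deriv u) t with hP
    set Q := deriv (deriv v) t with hQ
    set w := speedSG r u v t with hww
    have hcu0 : cu ≠ 0 := ne_of_gt hcupos
    have hcv0 : cv ≠ 0 := ne_of_gt hcvpos
    have hd1 : r * w ^ 3 ≠ 0 := mul_ne_zero hr0 (pow_ne_zero 3 hw0)
    have hd3 : r * w ^ 3 * (cu * cv) ≠ 0 := mul_ne_zero hd1 (mul_ne_zero hcu0 hcv0)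
    have hD : r * cu * cv
          * ((((cu * sv * p ^ 2 + 2 * su * cv * p * q + cu * sv * q ^ 2) / r
                + su * sv * P + cu * cv * Q) * (cu * p))
            - (su * sv * p + cu * cv * q) * (su * p ^ 2 / r + cu * P))
        - r * cu * sv
          * ((((cu * cv * p ^ 2 + 2 * su * sv * p * q + cu * cv * q ^ 2) / r
                + su * cv * P + cu * sv * Q) * (cu * p))
            - (su * cv * p + cu * sv * q) * (su * p ^ 2 / r + cu * P))
        + r * su
          * ((((cu * cv * p ^ 2 + 2 * su * sv * p * q + cu * cv * q ^ 2) / r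
                + su * cv * P + cu * sv * Q) * (su * sv * p + cu * cv * q))
            - (su * cv * p + cu * sv * q)
              * ((cu * sv * p ^ 2 + 2 * su * cv * p * q + cu * sv * q ^ 2) / r
                + su * sv * P + cu * cv * Q))
        = 2 * su * p ^ 2 * q + su * cu ^ 2 * q ^ 3 + r * cu * (p * Q - q * P) := by
      linear_combination (norm := (field_simp; ring1))
        (-(su * q ^ 3) - su * sv ^ 2 * q ^ 3 - 2 * su * sv ^ 2 * p ^ 2 * q
          + su * cv ^ 2 * q ^ 3 + 2 * su * cv ^ 2 * p ^ 2 * q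
          + cu * sv ^ 2 * q * P * r - cu * sv ^ 2 * p * Q * r
          - cu * cv ^ 2 * q * P * r + cu * cv ^ 2 * p * Q * r) * hc2
        + (su * q ^ 3 + 2 * su * p ^ 2 * q + su ^ 3 * q ^ 3
            - cu * q * P * r + cu * p * Q * r) * hC2
    rw [hD]
    rw [aux_iff hd1 (show
        (su * cv / r * w + cu * cv * su * cu * q ^ 2 / (r * w)
          - (((su * cv * p + cu * sv * q) / r * p + cu * cv * P) * w
              - cu * cv * p * ((p * P + su * cu * p * q ^ 2 / r + cu ^ 2 * q * Q) / w))
            / w ^ 2) * (r * w ^ 3)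
        = cu * q * (-(sv * p ^ 3) - cu ^ 2 * sv * p * q ^ 2 + 3 * su * cu * cv * p ^ 2 * q
            + 2 * su * cu ^ 3 * cv * q ^ 3 + r * cu ^ 2 * cv * (p * Q - P * q)) from by
      linear_combination (norm := (field_simp; ring1)) (su * cv * w ^ 2 - cu * sv * p * q - cu * cv * P * r
        + 2 * cu ^ 2 * su * cv * q ^ 2) * hw2)]
    rw [aux_iff hd1 (show
        (cu * sv / r * w
          - ((((su * cv * p + cu * sv * q) / r * q + cu * cv * Q) * cu ^ 2
                + cu * cv * q * (2 * cu * su * p / r)) * w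
              - cu * cv * q * cu ^ 2
                  * ((p * P + su * cu * p * q ^ 2 / r + cu ^ 2 * q * Q) / w))
            / w ^ 2) * (r * w ^ 3)
        = -(cu * p * (-(sv * p ^ 3) - cu ^ 2 * sv * p * q ^ 2 + 3 * su * cu * cv * p ^ 2 * q
            + 2 * su * cu ^ 3 * cv * q ^ 3 + r * cu ^ 2 * cv * (p * Q - P * q))) from by
      linear_combination (norm := (field_simp; ring1)) (cu * sv * w ^ 2 + cu * sv * p ^ 2 - 3 * cu ^ 2 * su * cv * p * q
        - cu ^ 3 * cv * Q * r) * hw2)]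
    rw [aux_iff hd3 (show
        (-(2 * su * p ^ 2 * q + su * cu ^ 2 * q ^ 3 + r * cu * (p * Q - q * P)) / (r * w ^ 3)
          - 1 / (r * w) * (-(p * sv / (cu * cv)) + q * su)) * (r * w ^ 3 * (cu * cv))
        = -(-(sv * p ^ 3) - cu ^ 2 * sv * p * q ^ 2 + 3 * su * cu * cv * p ^ 2 * q
            + 2 * su * cu ^ 3 * cv * q ^ 3 + r * cu ^ 2 * cv * (p * Q - P * q)) from by
      linear_combination (norm := (field_simp; ring1)) (sv * p - cu * su * cv * q) * hw2)]
    constructor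
    · rintro ⟨ha, hb⟩
      rw [neg_eq_zero]
      rcases mul_eq_zero.1 ha with h | h
      · rcases mul_eq_zero.1 (neg_eq_zero.1 hb) with h' | h'
        · have hq0 : q = 0 := by
            rcases mul_eq_zero.1 h with h2 | h2
            · exact absurd h2 hcu0
            · exact h2
          have hp0 : p = 0 := by
            rcases mul_eq_zero.1 h' with h2 | h2
            · exact absurd h2 hcu0
            · exact h2
          exact absurd (by rw [hp0, hq0]) hregt
        · exact h'
      · exact h
    · intro hN
      have hN' := neg_eq_zero.1 hN
      constructor
      · rw [hN', mul_zero]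
      · rw [hN', mul_zero, neg_zero]
  constructor
  · intro h t
    exact (key t).1 (h t)
  · intro h t
    exact (key t).2 (h t)
end
end

section
/- Let r > 0 and let u, v : ℝ → ℝ be twice differentiable with (u̇(t), v̇(t)) ≠ (0,0) for all t. Then γ(t) = ψ(u(t), v(t)) is an extrinsic catenary of parabolic type (i.e., satisfies the Euler–Lagrange equations of ∫ f(u,v)‖γ̇‖ dt with f(u,v) = e^{−v/r}cosh(u/r)) if and only if its geodesic curvature κ in H²(r) satisfies κ = (1/(r‖γ̇‖))·(u̇/cosh(u/r) + v̇ sinh(u/r)) for all t. -/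
noncomputable section
open Real

namespace Cat

variable {r : ℝ} {u v : ℝ → ℝ}

/-- derivative of `s ↦ cosh (u s / r)` -/
lemma hd_coshu (hu : Differentiable ℝ u) (t : ℝ) :
    HasDerivAt (fun s => Real.cosh (u s / r)) (Real.sinh (u t / r) * (deriv u t / r)) t :=
  (Real.hasDerivAt_cosh _).comp t ((hu t).hasDerivAt.div_const r)

lemma hd_sinhu (hu : Differentiable ℝ u) (t : ℝ) :
    HasDerivAt (fun s => Real.sinh (u s / r)) (Real.cosh (u t / r) * (deriv u t / r)) t :=
  (Real.hasDerivAt_sinh _).comp t ((hu t).hasDerivAt.div_const r)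

lemma hd_expv (hv : Differentiable ℝ v) (t : ℝ) :
    HasDerivAt (fun s => Real.exp (-v s / r)) (Real.exp (-v t / r) * (-deriv v t / r)) t := by
  have h : HasDerivAt (fun s => -v s / r) (-deriv v t / r) t := ((hv t).hasDerivAt.neg).div_const r
  exact (Real.hasDerivAt_exp _).comp t h

lemma speedSG_pos (t : ℝ) (hreg : (deriv u t, deriv v t) ≠ (0, 0)) : 0 < speedSG r u v t := by
  have hc : 1 ≤ Real.cosh (u t / r) := Real.one_le_cosh _
  have hor : deriv u t ≠ 0 ∨ deriv v t ≠ 0 := by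
    by_contra h
    push_neg at h
    exact hreg (by simp [h.1, h.2])
  have hpos : 0 < (deriv u t) ^ 2 + (Real.cosh (u t / r)) ^ 2 * (deriv v t) ^ 2 := by
    rcases hor with h | h
    · nlinarith [sq_nonneg (deriv v t), pow_two_pos_of_ne_zero h]
    · nlinarith [sq_nonneg (deriv u t), pow_two_pos_of_ne_zero h,
        mul_le_mul_of_nonneg_right
          (one_le_pow_iff_of_nonneg (Real.cosh_pos _).le two_ne_zero |>.mpr hc :
            (1:ℝ) ≤ Real.cosh (u t / r) ^ 2) (sq_nonneg (deriv v t))]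
  exact Real.sqrt_pos.mpr hpos

lemma speedSG_sq (t : ℝ) :
    (speedSG r u v t) ^ 2 = (deriv u t) ^ 2 + (Real.cosh (u t / r)) ^ 2 * (deriv v t) ^ 2 :=
  Real.sq_sqrt (by positivity)

lemma hd_speedSG (hu : Differentiable ℝ u) (hu2 : Differentiable ℝ (deriv u))
    (hv : Differentiable ℝ v) (hv2 : Differentiable ℝ (deriv v)) (t : ℝ)
    (hreg : (deriv u t, deriv v t) ≠ (0, 0)) :
    HasDerivAt (speedSG r u v)
      ((2 * deriv u t * deriv (deriv u) t
        + (2 * Real.cosh (u t / r) * (Real.sinh (u t / r) * (deriv u t / r))) * (deriv v t) ^ 2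
        + (Real.cosh (u t / r)) ^ 2 * (2 * deriv v t * deriv (deriv v) t))
        / (2 * speedSG r u v t)) t := by
  have hg : HasDerivAt (fun s => (deriv u s) ^ 2 + (Real.cosh (u s / r)) ^ 2 * (deriv v s) ^ 2)
      (2 * deriv u t * deriv (deriv u) t
        + (2 * Real.cosh (u t / r) * (Real.sinh (u t / r) * (deriv u t / r))) * (deriv v t) ^ 2
        + (Real.cosh (u t / r)) ^ 2 * (2 * deriv v t * deriv (deriv v) t)) t := by
    have h1 : HasDerivAt (fun s => (deriv u s) ^ 2) (2 * deriv u t * deriv (deriv u) t) t := by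
      simpa using ((hu2 t).hasDerivAt.fun_pow 2)
    have h2 : HasDerivAt (fun s => (Real.cosh (u s / r)) ^ 2)
        (2 * Real.cosh (u t / r) * (Real.sinh (u t / r) * (deriv u t / r))) t := by
      simpa [mul_assoc] using ((hd_coshu hu t).fun_pow 2)
    have h3 : HasDerivAt (fun s => (deriv v s) ^ 2) (2 * deriv v t * deriv (deriv v) t) t := by
      simpa using ((hv2 t).hasDerivAt.fun_pow 2)
    have := h1.add (h2.mul h3)
    rwa [← add_assoc] at this
  have hpos : 0 < (deriv u t) ^ 2 + (Real.cosh (u t / r)) ^ 2 * (deriv v t) ^ 2 := by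
    have := speedSG_pos (r := r) t hreg
    have h2 := speedSG_sq (r := r) (u := u) (v := v) t
    nlinarith
  exact hg.sqrt hpos.ne'

/-- derivative function of gX -/
def d1X (r : ℝ) (u v : ℝ → ℝ) (s : ℝ) : ℝ :=
  Real.sinh (u s / r) * deriv u s * Real.cosh (v s / r)
    + Real.cosh (u s / r) * Real.sinh (v s / r) * deriv v s

def d1Y (r : ℝ) (u v : ℝ → ℝ) (s : ℝ) : ℝ :=
  Real.sinh (u s / r) * deriv u s * Real.sinh (v s / r)
    + Real.cosh (u s / r) * Real.cosh (v s / r) * deriv v s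

def d1Z (r : ℝ) (u : ℝ → ℝ) (s : ℝ) : ℝ :=
  Real.cosh (u s / r) * deriv u s

lemma deriv_gX (hr : r ≠ 0) (hu : Differentiable ℝ u) (hv : Differentiable ℝ v) :
    deriv (gX r u v) = d1X r u v := by
  funext s
  have h : HasDerivAt (gX r u v) (d1X r u v s) s :=
    ((((hd_coshu hu s).const_mul r).mul (hd_coshu (u := v) hv s))).congr_deriv
      (by simp only [d1X]; field_simp)
  exact h.deriv

lemma deriv_gY (hr : r ≠ 0) (hu : Differentiable ℝ u) (hv : Differentiable ℝ v) :
    deriv (gY r u v) = d1Y r u v := by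
  funext s
  have h : HasDerivAt (gY r u v) (d1Y r u v s) s :=
    ((((hd_coshu hu s).const_mul r).mul (hd_sinhu (u := v) hv s))).congr_deriv
      (by simp only [d1Y]; field_simp)
  exact h.deriv

lemma deriv_gZ (hr : r ≠ 0) (hu : Differentiable ℝ u) :
    deriv (gZ r u v) = d1Z r u := by
  funext s
  have h : HasDerivAt (gZ r u v) (d1Z r u s) s :=
    (((hd_sinhu hu s).const_mul r)).congr_deriv (by simp only [d1Z]; field_simp)
  exact h.deriv

set_option maxHeartbeats 1000000 in
lemma core (hr : 0 < r)
    (hu : Differentiable ℝ u) (hu2 : Differentiable ℝ (deriv u))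
    (hv : Differentiable ℝ v) (hv2 : Differentiable ℝ (deriv v))
    (t : ℝ) (hreg : (deriv u t, deriv v t) ≠ (0, 0)) :
    ((deriv (fun a => Real.exp (-v t / r) * Real.cosh (a / r)) (u t) * speedSG r u v t
        + Real.exp (-v t / r) * Real.cosh (u t / r) * Real.sinh (u t / r) * Real.cosh (u t / r)
            * (deriv v t) ^ 2 / (r * speedSG r u v t)
      = deriv (fun s => Real.exp (-v s / r) * Real.cosh (u s / r) * deriv u s / speedSG r u v s) t)
    ∧ (deriv (fun b => Real.exp (-b / r) * Real.cosh (u t / r)) (v t) * speedSG r u v t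
      = deriv (fun s =>
          Real.exp (-v s / r) * Real.cosh (u s / r) * deriv v s * (Real.cosh (u s / r)) ^ 2
            / speedSG r u v s) t))
    ↔ kappaSG r u v t
        = 1 / (r * speedSG r u v t)
          * (deriv u t / Real.cosh (u t / r) + deriv v t * Real.sinh (u t / r)) := by
  have hrne : r ≠ 0 := hr.ne'
  set U1 := deriv u t with hU1def
  set U2 := deriv (deriv u) t with hU2def
  set V1 := deriv v t with hV1def
  set V2 := deriv (deriv v) t with hV2def
  set c := Real.cosh (u t / r) with hcdef
  set s := Real.sinh (u t / r) with hsdef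
  set C := Real.cosh (v t / r) with hCdef
  set S := Real.sinh (v t / r) with hSdef
  set E := Real.exp (-v t / r) with hEdef
  set W := speedSG r u v t with hWdef
  have hW : 0 < W := speedSG_pos (r := r) t hreg
  have hWne : W ≠ 0 := hW.ne'
  have hW2 : W ^ 2 = U1 ^ 2 + c ^ 2 * V1 ^ 2 := speedSG_sq t
  have hcpos : 0 < c := Real.cosh_pos _
  have hEpos : 0 < E := Real.exp_pos _
  have hcs : c ^ 2 - s ^ 2 = 1 := Real.cosh_sq_sub_sinh_sq _
  have hCS : C ^ 2 - S ^ 2 = 1 := Real.cosh_sq_sub_sinh_sq _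
  -- partial derivatives
  have hpa : HasDerivAt (fun a => E * Real.cosh (a / r)) (E * (s * (1 / r))) (u t) := by
    have h1 : HasDerivAt (fun a : ℝ => a / r) (1 / r) (u t) := (hasDerivAt_id (u t)).div_const r
    exact ((Real.hasDerivAt_cosh _).comp (u t) h1).const_mul _
  have hpb : HasDerivAt (fun b => Real.exp (-b / r) * c) (E * (-1 / r) * c) (v t) := by
    have h1 : HasDerivAt (fun b : ℝ => -b / r) (-1 / r) (v t) :=
      ((hasDerivAt_id (v t)).neg).div_const r
    exact ((Real.hasDerivAt_exp _).comp (v t) h1).mul_const _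
  -- Euler-Lagrange derivatives
  have hWd := hd_speedSG (r := r) hu hu2 hv hv2 t hreg
  have hF1 : HasDerivAt
      (fun s => Real.exp (-v s / r) * Real.cosh (u s / r) * deriv u s / speedSG r u v s) _ t :=
    (((hd_expv hv t).fun_mul (hd_coshu hu t)).fun_mul (hu2 t).hasDerivAt).fun_div hWd hWne
  have hF2 : HasDerivAt
      (fun s => Real.exp (-v s / r) * Real.cosh (u s / r) * deriv v s
        * (Real.cosh (u s / r)) ^ 2 / speedSG r u v s) _ t :=
    ((((hd_expv hv t).fun_mul (hd_coshu hu t)).fun_mul (hv2 t).hasDerivAt).fun_mul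
      (by simpa [mul_assoc] using (hd_coshu hu t).fun_pow 2 :
        HasDerivAt (fun s => (Real.cosh (u s / r)) ^ 2)
          (2 * Real.cosh (u t / r) * (Real.sinh (u t / r) * (deriv u t / r))) t)).fun_div hWd hWne
  have e1 : deriv
      (fun s => Real.exp (-v s / r) * Real.cosh (u s / r) * deriv u s / speedSG r u v s) t
      = E * (-c * U1 * V1 / r + s * U1 ^ 2 / r + c * U2) / W
        - E * c * U1 * (U1 * U2 + c * s * U1 * V1 ^ 2 / r + c ^ 2 * V1 * V2) / W ^ 3 := by
    rw [hF1.deriv]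
    simp only [← hWdef, ← hU1def, ← hU2def, ← hV1def, ← hV2def, ← hcdef, ← hsdef, ← hEdef]
    field_simp
  have e2 : deriv
      (fun s => Real.exp (-v s / r) * Real.cosh (u s / r) * deriv v s
        * (Real.cosh (u s / r)) ^ 2 / speedSG r u v s) t
      = E * (-(c ^ 3) * V1 ^ 2 / r + 3 * c ^ 2 * s * U1 * V1 / r + c ^ 3 * V2) / W
        - E * c ^ 3 * V1 * (U1 * U2 + c * s * U1 * V1 ^ 2 / r + c ^ 2 * V1 * V2) / W ^ 3 := by
    rw [hF2.deriv]
    simp only [← hWdef, ← hU1def, ← hU2def, ← hV1def, ← hV2def, ← hcdef, ← hsdef, ← hEdef]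
    field_simp
    ring
  -- second derivatives of the ambient curve
  have h2X : HasDerivAt (d1X r u v)
      ((c * U1 ^ 2 / r + s * U2) * C + 2 * s * U1 * S * V1 / r + c * C * V1 ^ 2 / r
        + c * S * V2) t :=
    (((((hd_sinhu hu t).fun_mul (hu2 t).hasDerivAt).fun_mul (hd_coshu (u := v) hv t)).add
      (((hd_coshu hu t).fun_mul (hd_sinhu (u := v) hv t)).fun_mul (hv2 t).hasDerivAt)).congr_deriv
      (by simp only [← hU1def, ← hU2def, ← hV1def, ← hV2def, ← hcdef, ← hsdef, ← hCdef, ← hSdef]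
          field_simp; ring))
  have h2Y : HasDerivAt (d1Y r u v)
      ((c * U1 ^ 2 / r + s * U2) * S + 2 * s * U1 * C * V1 / r + c * S * V1 ^ 2 / r
        + c * C * V2) t :=
    (((((hd_sinhu hu t).fun_mul (hu2 t).hasDerivAt).fun_mul (hd_sinhu (u := v) hv t)).add
      (((hd_coshu hu t).fun_mul (hd_coshu (u := v) hv t)).fun_mul (hv2 t).hasDerivAt)).congr_deriv
      (by simp only [← hU1def, ← hU2def, ← hV1def, ← hV2def, ← hcdef, ← hsdef, ← hCdef, ← hSdef]
          field_simp; ring))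
  have h2Z : HasDerivAt (d1Z r u) (s * U1 ^ 2 / r + c * U2) t :=
    ((((hd_coshu hu t).fun_mul (hu2 t).hasDerivAt)).congr_deriv
      (by simp only [← hU1def, ← hU2def, ← hcdef, ← hsdef]; field_simp))
  -- speed of the ambient curve
  have espeed : speed3 (gX r u v) (gY r u v) (gZ r u v) t = W := by
    unfold speed3
    rw [deriv_gX hrne hu hv, deriv_gY hrne hu hv, deriv_gZ hrne hu]
    rw [hWdef]
    unfold speedSG
    congr 1
    simp only [d1X, d1Y, d1Z]
    simp only [← hU1def, ← hV1def, ← hcdef, ← hsdef, ← hCdef, ← hSdef]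
    linear_combination (V1 ^ 2 * c ^ 2 - U1 ^ 2 * s ^ 2) * hCS + U1 ^ 2 * hcs
  -- curvature formula
  have ekap : kappaSG r u v t
      = -(r * c * (U1 * V2 - V1 * U2) + s * (2 * U1 ^ 2 * V1 + c ^ 2 * V1 ^ 3)) / (r * W ^ 3) := by
    unfold kappaSG kappaH2
    rw [espeed, deriv_gX hrne hu hv, deriv_gY hrne hu hv, deriv_gZ hrne hu,
      h2X.deriv, h2Y.deriv, h2Z.deriv]
    simp only [gX, gY, gZ, d1X, d1Y, d1Z]
    simp only [← hU1def, ← hU2def, ← hV1def, ← hV2def, ← hcdef, ← hsdef, ← hCdef, ← hSdef]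
    rw [div_eq_div_iff (by positivity) (by positivity)]
    field_simp
    linear_combination ((-1)*r*c^3*U1*V2 + 1*r*c^3*U2*V1 + 1*r*c*s^2*U1*V2 + (-1)*r*c*s^2*U2*V1 + (-2)*c^2*s*U1^2*V1 + (-1)*c^2*s*V1^3 + 2*s^3*U1^2*V1) * hCS + ((-1)*r*c*U1*V2 + 1*r*c*U2*V1 + (-2)*s*U1^2*V1) * hcs
  rw [hpa.deriv, hpb.deriv, e1, e2, ekap]
  have hMne : E * r ^ 4 * c * (U1 ^ 2 + c ^ 2 * V1 ^ 2) ≠ 0 :=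
    mul_ne_zero (mul_ne_zero (mul_ne_zero hEpos.ne' (pow_ne_zero 4 hrne)) hcpos.ne')
      (by rw [← hW2]; exact pow_ne_zero 2 hWne)
  have hNne : E * r ^ 3 * c * W ≠ 0 :=
    mul_ne_zero (mul_ne_zero (mul_ne_zero hEpos.ne' (pow_ne_zero 3 hrne)) hcpos.ne') hWne
  constructor
  · rintro ⟨h1, h2⟩
    have hO : U1 ≠ 0 ∨ V1 ≠ 0 := by
      by_contra h
      push_neg at h
      exact hreg (by rw [h.1, h.2])
    field_simp at h1 h2 ⊢
    have hP : r * c ^ 2 * (U1 * V2 - V1 * U2) + U1 ^ 3 + c ^ 2 * U1 * V1 ^ 2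
        + 3 * c * s * U1 ^ 2 * V1 + 2 * c ^ 3 * s * V1 ^ 3 = 0 := by
      rcases hO with h | h
      · have hu1 : U1 * (r * c ^ 2 * (U1 * V2 - V1 * U2) + U1 ^ 3 + c ^ 2 * U1 * V1 ^ 2
            + 3 * c * s * U1 ^ 2 * V1 + 2 * c ^ 3 * s * V1 ^ 3) * (E * r ^ 3 * c * W) = 0 := by
          linear_combination ((-1)*r^3*c*W*E) * h2 + ((-1)*r^3*c*W^3*E + (-1)*r^4*c^3*V2*W*E + (-3)*r^3*c^2*s*U1*V1*W*E + (-1)*r^3*c*U1^2*W*E) * hW2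
        rcases mul_eq_zero.mp hu1 with h' | h'
        · exact (mul_eq_zero.mp h').resolve_left h
        · exact absurd h' hNne
      · have hv1 : V1 * (r * c ^ 2 * (U1 * V2 - V1 * U2) + U1 ^ 3 + c ^ 2 * U1 * V1 ^ 2
            + 3 * c * s * U1 ^ 2 * V1 + 2 * c ^ 3 * s * V1 ^ 3)
            * (E * r ^ 4 * c * (U1 ^ 2 + c ^ 2 * V1 ^ 2)) = 0 := by
          linear_combination (1*r^4*c^2*V1^2*E + 1*r^4*U1^2*E) * h1 + ((-1)*r^4*c^2*s*V1^2*W^2*E + (-1)*r^4*s*U1^2*W^2*E + 1*r^5*c^3*U2*V1^2*E + 1*r^5*c*U1^2*U2*E + (-2)*r^4*c^4*s*V1^4*E + (-1)*r^4*c^3*U1*V1^3*E + (-2)*r^4*c^2*s*U1^2*V1^2*E + (-1)*r^4*c*U1^3*V1*E) * hW2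
        rcases mul_eq_zero.mp hv1 with h' | h'
        · exact (mul_eq_zero.mp h').resolve_left h
        · exact absurd h' hMne
    linear_combination ((-1)) * hP + ((-1)*c*s*V1 + (-1)*U1) * hW2
  · intro hk
    field_simp at hk
    have hP : r * c ^ 2 * (U1 * V2 - V1 * U2) + U1 ^ 3 + c ^ 2 * U1 * V1 ^ 2
        + 3 * c * s * U1 ^ 2 * V1 + 2 * c ^ 3 * s * V1 ^ 3 = 0 := by
      have hP' : (r * c ^ 2 * (U1 * V2 - V1 * U2) + U1 ^ 3 + c ^ 2 * U1 * V1 ^ 2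
          + 3 * c * s * U1 ^ 2 * V1 + 2 * c ^ 3 * s * V1 ^ 3) * (r * W) = 0 := by
        linear_combination ((-1)*r*W) * hk + ((-1)*r*c*s*V1*W + (-1)*r*U1*W) * hW2
      rcases mul_eq_zero.mp hP' with h' | h'
      · exact h'
      · exact absurd h' (mul_ne_zero hrne hWne)
    constructor
    · field_simp
      linear_combination (1*c*V1) * hP + (1*s*W^2 + (-1)*r*c*U2 + 2*c^2*s*V1^2 + 1*c*U1*V1) * hW2
    · field_simp
      linear_combination ((-1)*U1) * hP + ((-1)*W^2 + (-1)*r*c^2*V2 + (-3)*c*s*U1*V1 + (-1)*U1^2) * hW2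

end Cat

/-- extrinsic catenaries of parabolic type. -/
theorem extrinsic_catenary_parabolic_iff (r : ℝ) (hr : 0 < r) (u v : ℝ → ℝ)
    (hu : Differentiable ℝ u) (hu2 : Differentiable ℝ (deriv u))
    (hv : Differentiable ℝ v) (hv2 : Differentiable ℝ (deriv v))
    (hreg : ∀ t : ℝ, (deriv u t, deriv v t) ≠ (0, 0)) :
    EulerLagrange r (fun a b => Real.exp (-b / r) * Real.cosh (a / r)) u v ↔
      ∀ t : ℝ,
        kappaSG r u v t
          = 1 / (r * speedSG r u v t)
            * (deriv u t / Real.cosh (u t / r)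
              + deriv v t * Real.sinh (u t / r)) := by
  unfold EulerLagrange
  exact forall_congr' fun t => Cat.core hr hu hu2 hv hv2 t (hreg t)
end
end

section
/- Let r > 0, let f : ℝ² → ℝ be a positive twice continuously differentiable function, and let u, v : ℝ → ℝ be twice differentiable with (u̇, v̇) ≠ (0,0). For γ(t) = ψ(u(t), v(t)), define the unit normal n(t) = (1/‖γ̇‖)·(−v̇ cosh(u/r)·ψ_u + (u̇/cosh(u/r))·ψ_v) and the gradient vector ∇f = f_u·ψ_u + (f_v/cosh²(u/r))·ψ_v, where ψ_u = (sinh(u/r)cosh(v/r), sinh(u/r)sinh(v/r), cosh(u/r)) and ψ_v = (cosh(u/r)sinh(v/r), cosh(u/r)cosh(v/r), 0). Then γ satisfies the Euler–Lagrange equations of the functional ∫ f(u,v)‖γ̇‖ dt if and only if its geodesic curvature κ in H²(r) satisfies κ = −⟨n, ∇f⟩₁/f for all t. -/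
noncomputable section
open Real

/-- `ψ_u(u,v)`. -/
def psiU (r a b : ℝ) : ℝ × ℝ × ℝ :=
  (Real.sinh (a / r) * Real.cosh (b / r), Real.sinh (a / r) * Real.sinh (b / r),
    Real.cosh (a / r))

/-- `ψ_v(u,v)`. -/
def psiV (r a b : ℝ) : ℝ × ℝ × ℝ :=
  (Real.cosh (a / r) * Real.sinh (b / r), Real.cosh (a / r) * Real.cosh (b / r), 0)

/-- Unit normal of `γ(t) = ψ(u(t), v(t))` in `H²(r)`:
`n = (1/‖γ̇‖)(−v̇ cosh(u/r) ψ_u + (u̇ / cosh(u/r)) ψ_v)`. -/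
def unitNormal (r : ℝ) (u v : ℝ → ℝ) (t : ℝ) : ℝ × ℝ × ℝ :=
  (speedSG r u v t)⁻¹ •
    ((-(deriv v t * Real.cosh (u t / r))) • psiU r (u t) (v t)
      + (deriv u t / Real.cosh (u t / r)) • psiV r (u t) (v t))

/-- Core algebraic equivalence. -/
private lemma alg_core (r A B Ap Bp s c F Fu Fv w K T : ℝ) (hr : r ≠ 0) (hw : 0 < w)
    (hF : F ≠ 0) (hc : c ≠ 0)
    (hw2 : w ^ 2 = A ^ 2 + c ^ 2 * B ^ 2)
    (hK : K = (r * c * (Ap * B - A * Bp) - s * B * (c ^ 2 * B ^ 2 + 2 * A ^ 2)) / (r * w ^ 3))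
    (hT : T = (B * c ^ 2 * Fu - A * Fv) / (c * w * F)) :
    (Fu * w + F * s * c * B ^ 2 / (r * w)
        = (((Fu * A + Fv * B) * A + F * Ap) * w
            - F * A * ((A * Ap + c * s * A * B ^ 2 / r + c ^ 2 * B * Bp) / w)) / w ^ 2
      ∧ Fv * w
        = ((((Fu * A + Fv * B) * B + F * Bp) * c ^ 2 + F * B * (2 * c * s * A / r)) * w
            - F * B * c ^ 2 * ((A * Ap + c * s * A * B ^ 2 / r + c ^ 2 * B * Bp) / w)) / w ^ 2)
      ↔ K = T := by
  have hwne : w ≠ 0 := ne_of_gt hw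
  have hrw3 : r * w ^ 3 ≠ 0 := mul_ne_zero hr (pow_ne_zero 3 hwne)
  have h1 : (Fu * w + F * s * c * B ^ 2 / (r * w)
      = (((Fu * A + Fv * B) * A + F * Ap) * w
          - F * A * ((A * Ap + c * s * A * B ^ 2 / r + c ^ 2 * B * Bp) / w)) / w ^ 2)
      ↔ (Fu * r * w ^ 4 + F * s * c * B ^ 2 * w ^ 2 - (Fu * A + Fv * B) * A * r * w ^ 2
          - F * Ap * r * w ^ 2 + F * A * (r * A * Ap + c * s * A * B ^ 2 + r * c ^ 2 * B * Bp)) = 0 := by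
    rw [← sub_eq_zero]
    have key : Fu * w + F * s * c * B ^ 2 / (r * w)
        - (((Fu * A + Fv * B) * A + F * Ap) * w
            - F * A * ((A * Ap + c * s * A * B ^ 2 / r + c ^ 2 * B * Bp) / w)) / w ^ 2
        = (Fu * r * w ^ 4 + F * s * c * B ^ 2 * w ^ 2 - (Fu * A + Fv * B) * A * r * w ^ 2
          - F * Ap * r * w ^ 2 + F * A * (r * A * Ap + c * s * A * B ^ 2 + r * c ^ 2 * B * Bp))
          / (r * w ^ 3) := by
      field_simp
      ring
    rw [key, div_eq_zero_iff, or_iff_left hrw3]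
  have h2 : (Fv * w
      = ((((Fu * A + Fv * B) * B + F * Bp) * c ^ 2 + F * B * (2 * c * s * A / r)) * w
          - F * B * c ^ 2 * ((A * Ap + c * s * A * B ^ 2 / r + c ^ 2 * B * Bp) / w)) / w ^ 2)
      ↔ (Fv * r * w ^ 4 - (Fu * A + Fv * B) * B * c ^ 2 * r * w ^ 2 - F * Bp * c ^ 2 * r * w ^ 2
          - 2 * F * A * B * c * s * w ^ 2
          + F * B * c ^ 2 * (r * A * Ap + c * s * A * B ^ 2 + r * c ^ 2 * B * Bp)) = 0 := by
    rw [← sub_eq_zero]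
    have key : Fv * w
        - ((((Fu * A + Fv * B) * B + F * Bp) * c ^ 2 + F * B * (2 * c * s * A / r)) * w
            - F * B * c ^ 2 * ((A * Ap + c * s * A * B ^ 2 / r + c ^ 2 * B * Bp) / w)) / w ^ 2
        = (Fv * r * w ^ 4 - (Fu * A + Fv * B) * B * c ^ 2 * r * w ^ 2 - F * Bp * c ^ 2 * r * w ^ 2
          - 2 * F * A * B * c * s * w ^ 2
          + F * B * c ^ 2 * (r * A * Ap + c * s * A * B ^ 2 + r * c ^ 2 * B * Bp)) / (r * w ^ 3) := by
      field_simp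
      ring
    rw [key, div_eq_zero_iff, or_iff_left hrw3]
  have h3 : (K = T) ↔ (r * c * (Ap * B - A * Bp) - s * B * (c ^ 2 * B ^ 2 + 2 * A ^ 2)) * (c * w * F)
      = (B * c ^ 2 * Fu - A * Fv) * (r * w ^ 3) := by
    rw [hK, hT, div_eq_div_iff hrw3 (mul_ne_zero (mul_ne_zero hc hwne) hF)]
  rw [h1, h2, h3]
  constructor
  · rintro ⟨p, q⟩
    have h5 : w * ((r * c * (Ap * B - A * Bp) - s * B * (c ^ 2 * B ^ 2 + 2 * A ^ 2)) * (c * w * F)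
        - (B * c ^ 2 * Fu - A * Fv) * (r * w ^ 3)) = 0 := by
      linear_combination (-(B * c ^ 2)) * p + A * q
    have h6 := (mul_eq_zero.mp h5).resolve_left hwne
    linarith
  · intro hkt
    have hJ1 : A * (Fu * r * w ^ 4 + F * s * c * B ^ 2 * w ^ 2 - (Fu * A + Fv * B) * A * r * w ^ 2
          - F * Ap * r * w ^ 2 + F * A * (r * A * Ap + c * s * A * B ^ 2 + r * c ^ 2 * B * Bp))
        + B * (Fv * r * w ^ 4 - (Fu * A + Fv * B) * B * c ^ 2 * r * w ^ 2 - F * Bp * c ^ 2 * r * w ^ 2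
          - 2 * F * A * B * c * s * w ^ 2
          + F * B * c ^ 2 * (r * A * Ap + c * s * A * B ^ 2 + r * c ^ 2 * B * Bp)) = 0 := by
      linear_combination (r * B * Fv * w ^ 2 - r * B * Bp * c ^ 2 * F + r * A * Fu * w ^ 2
        - r * A * Ap * F - A * B ^ 2 * s * c * F) * hw2
    have hJ2 : -(B * c ^ 2) * (Fu * r * w ^ 4 + F * s * c * B ^ 2 * w ^ 2
          - (Fu * A + Fv * B) * A * r * w ^ 2 - F * Ap * r * w ^ 2
          + F * A * (r * A * Ap + c * s * A * B ^ 2 + r * c ^ 2 * B * Bp))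
        + A * (Fv * r * w ^ 4 - (Fu * A + Fv * B) * B * c ^ 2 * r * w ^ 2 - F * Bp * c ^ 2 * r * w ^ 2
          - 2 * F * A * B * c * s * w ^ 2
          + F * B * c ^ 2 * (r * A * Ap + c * s * A * B ^ 2 + r * c ^ 2 * B * Bp)) = 0 := by
      linear_combination w * hkt
    constructor
    · have h3' : w ^ 2 * (Fu * r * w ^ 4 + F * s * c * B ^ 2 * w ^ 2
          - (Fu * A + Fv * B) * A * r * w ^ 2 - F * Ap * r * w ^ 2
          + F * A * (r * A * Ap + c * s * A * B ^ 2 + r * c ^ 2 * B * Bp)) = 0 := by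
        linear_combination A * hJ1 - B * hJ2 + (Fu * r * w ^ 4 + F * s * c * B ^ 2 * w ^ 2
          - (Fu * A + Fv * B) * A * r * w ^ 2 - F * Ap * r * w ^ 2
          + F * A * (r * A * Ap + c * s * A * B ^ 2 + r * c ^ 2 * B * Bp)) * hw2
      exact (mul_eq_zero.mp h3').resolve_left (pow_ne_zero 2 hwne)
    · have h4' : w ^ 2 * (Fv * r * w ^ 4 - (Fu * A + Fv * B) * B * c ^ 2 * r * w ^ 2
          - F * Bp * c ^ 2 * r * w ^ 2 - 2 * F * A * B * c * s * w ^ 2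
          + F * B * c ^ 2 * (r * A * Ap + c * s * A * B ^ 2 + r * c ^ 2 * B * Bp)) = 0 := by
        linear_combination c ^ 2 * B * hJ1 + A * hJ2 + (Fv * r * w ^ 4
          - (Fu * A + Fv * B) * B * c ^ 2 * r * w ^ 2 - F * Bp * c ^ 2 * r * w ^ 2
          - 2 * F * A * B * c * s * w ^ 2
          + F * B * c ^ 2 * (r * A * Ap + c * s * A * B ^ 2 + r * c ^ 2 * B * Bp)) * hw2
      exact (mul_eq_zero.mp h4').resolve_left (pow_ne_zero 2 hwne)

section helpers
variable {r : ℝ} {u v : ℝ → ℝ}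

private lemma coshU (r : ℝ) (hu : Differentiable ℝ u) (τ : ℝ) :
    HasDerivAt (fun s => Real.cosh (u s / r)) (Real.sinh (u τ / r) * (deriv u τ / r)) τ :=
  by have h := (Real.hasDerivAt_cosh (u τ / r)).comp τ ((hu τ).hasDerivAt.div_const r); exact h

private lemma sinhU (r : ℝ) (hu : Differentiable ℝ u) (τ : ℝ) :
    HasDerivAt (fun s => Real.sinh (u s / r)) (Real.cosh (u τ / r) * (deriv u τ / r)) τ :=
  by have h := (Real.hasDerivAt_sinh (u τ / r)).comp τ ((hu τ).hasDerivAt.div_const r); exact h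

private lemma gX_hasDeriv (hr : r ≠ 0) (hu : Differentiable ℝ u) (hv : Differentiable ℝ v) (τ : ℝ) :
    HasDerivAt (gX r u v)
      (Real.sinh (u τ / r) * Real.cosh (v τ / r) * deriv u τ
        + Real.cosh (u τ / r) * Real.sinh (v τ / r) * deriv v τ) τ := by
  have h : HasDerivAt (gX r u v) _ τ := ((coshU r hu τ).const_mul r).mul (coshU r hv τ)
  convert h using 1
  field_simp

private lemma gY_hasDeriv (hr : r ≠ 0) (hu : Differentiable ℝ u) (hv : Differentiable ℝ v) (τ : ℝ) :
    HasDerivAt (gY r u v)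
      (Real.sinh (u τ / r) * Real.sinh (v τ / r) * deriv u τ
        + Real.cosh (u τ / r) * Real.cosh (v τ / r) * deriv v τ) τ := by
  have h : HasDerivAt (gY r u v) _ τ := ((coshU r hu τ).const_mul r).mul (sinhU r hv τ)
  convert h using 1
  field_simp

private lemma gZ_hasDeriv (hr : r ≠ 0) (hu : Differentiable ℝ u) (τ : ℝ) :
    HasDerivAt (gZ r u v) (Real.cosh (u τ / r) * deriv u τ) τ := by
  have h : HasDerivAt (gZ r u v) _ τ := (sinhU r hu τ).const_mul r
  convert h using 1
  field_simp

private lemma deriv_gX_eq (hr : r ≠ 0) (hu : Differentiable ℝ u) (hv : Differentiable ℝ v) :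
    deriv (gX r u v) = fun τ =>
      Real.sinh (u τ / r) * Real.cosh (v τ / r) * deriv u τ
        + Real.cosh (u τ / r) * Real.sinh (v τ / r) * deriv v τ :=
  funext fun τ => (gX_hasDeriv hr hu hv τ).deriv

private lemma deriv_gY_eq (hr : r ≠ 0) (hu : Differentiable ℝ u) (hv : Differentiable ℝ v) :
    deriv (gY r u v) = fun τ =>
      Real.sinh (u τ / r) * Real.sinh (v τ / r) * deriv u τ
        + Real.cosh (u τ / r) * Real.cosh (v τ / r) * deriv v τ :=
  funext fun τ => (gY_hasDeriv hr hu hv τ).deriv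

private lemma deriv_gZ_eq (hr : r ≠ 0) (hu : Differentiable ℝ u) :
    deriv (gZ r u v) = fun τ => Real.cosh (u τ / r) * deriv u τ :=
  funext fun τ => (gZ_hasDeriv (v := v) hr hu τ).deriv

private lemma gX_dd (hr : r ≠ 0) (hu : Differentiable ℝ u) (hu2 : Differentiable ℝ (deriv u))
    (hv : Differentiable ℝ v) (hv2 : Differentiable ℝ (deriv v)) (τ : ℝ) :
    r * deriv (deriv (gX r u v)) τ
      = Real.cosh (u τ / r) * deriv u τ ^ 2 * Real.cosh (v τ / r)
        + 2 * Real.sinh (u τ / r) * deriv u τ * deriv v τ * Real.sinh (v τ / r)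
        + Real.cosh (u τ / r) * deriv v τ ^ 2 * Real.cosh (v τ / r)
        + r * Real.sinh (u τ / r) * Real.cosh (v τ / r) * deriv (deriv u) τ
        + r * Real.cosh (u τ / r) * Real.sinh (v τ / r) * deriv (deriv v) τ := by
  rw [deriv_gX_eq hr hu hv]
  have h := (((sinhU r hu τ).mul (coshU r hv τ)).mul (hu2 τ).hasDerivAt).add
    (((coshU r hu τ).mul (sinhU r hv τ)).mul (hv2 τ).hasDerivAt)
  simp only [Pi.mul_apply] at h
  erw [h.deriv]
  field_simp
  ring

private lemma gY_dd (hr : r ≠ 0) (hu : Differentiable ℝ u) (hu2 : Differentiable ℝ (deriv u))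
    (hv : Differentiable ℝ v) (hv2 : Differentiable ℝ (deriv v)) (τ : ℝ) :
    r * deriv (deriv (gY r u v)) τ
      = Real.cosh (u τ / r) * deriv u τ ^ 2 * Real.sinh (v τ / r)
        + 2 * Real.sinh (u τ / r) * deriv u τ * deriv v τ * Real.cosh (v τ / r)
        + Real.cosh (u τ / r) * deriv v τ ^ 2 * Real.sinh (v τ / r)
        + r * Real.sinh (u τ / r) * Real.sinh (v τ / r) * deriv (deriv u) τ
        + r * Real.cosh (u τ / r) * Real.cosh (v τ / r) * deriv (deriv v) τ := by
  rw [deriv_gY_eq hr hu hv]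
  have h := (((sinhU r hu τ).mul (sinhU r hv τ)).mul (hu2 τ).hasDerivAt).add
    (((coshU r hu τ).mul (coshU r hv τ)).mul (hv2 τ).hasDerivAt)
  simp only [Pi.mul_apply] at h
  erw [h.deriv]
  field_simp
  ring

private lemma gZ_dd (hr : r ≠ 0) (hu : Differentiable ℝ u) (hu2 : Differentiable ℝ (deriv u)) (τ : ℝ) :
    r * deriv (deriv (gZ r u v)) τ
      = Real.sinh (u τ / r) * deriv u τ ^ 2 + r * Real.cosh (u τ / r) * deriv (deriv u) τ := by
  rw [deriv_gZ_eq (v := v) hr hu]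
  have h := (coshU r hu τ).mul (hu2 τ).hasDerivAt
  erw [h.deriv]
  field_simp

end helpers

/-- Euler–Lagrange equations iff `κ = −⟨n, ∇f⟩₁ / f`. -/
theorem eulerLagrange_iff_normal_gradient (r : ℝ) (hr : 0 < r) (f : ℝ → ℝ → ℝ)
    (hf : ContDiff ℝ 2 (Function.uncurry f)) (hfpos : ∀ a b : ℝ, 0 < f a b)
    (u v : ℝ → ℝ)
    (hu : Differentiable ℝ u) (hu2 : Differentiable ℝ (deriv u))
    (hv : Differentiable ℝ v) (hv2 : Differentiable ℝ (deriv v))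
    (hreg : ∀ t : ℝ, (deriv u t, deriv v t) ≠ (0, 0)) :
    EulerLagrange r f u v ↔
      ∀ t : ℝ,
        kappaSG r u v t
          = -(mink3 (unitNormal r u v t)
                ((deriv (fun a => f a (v t)) (u t)) • psiU r (u t) (v t)
                  + (deriv (fun b => f (u t) b) (v t) / (Real.cosh (u t / r)) ^ 2) •
                    psiV r (u t) (v t)))
            / f (u t) (v t) := by
  have hr' : r ≠ 0 := ne_of_gt hr
  unfold EulerLagrange
  refine forall_congr' fun t => ?_
  -- basic nonvanishing facts
  have hcpos : 0 < Real.cosh (u t / r) := Real.cosh_pos _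
  have hcne : Real.cosh (u t / r) ≠ 0 := ne_of_gt hcpos
  have hFne : f (u t) (v t) ≠ 0 := ne_of_gt (hfpos _ _)
  have h01 : deriv u t ≠ 0 ∨ deriv v t ≠ 0 := by
    by_contra h
    push_neg at h
    exact hreg t (by rw [h.1, h.2])
  have hw2pos : 0 < (deriv u t) ^ 2 + (Real.cosh (u t / r)) ^ 2 * (deriv v t) ^ 2 := by
    rcases h01 with h | h
    · nlinarith [pow_two_pos_of_ne_zero h, sq_nonneg (Real.cosh (u t / r) * deriv v t),
        sq_nonneg (Real.cosh (u t / r)), sq_nonneg (deriv v t)]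
    · nlinarith [mul_pos (pow_pos hcpos 2) (pow_two_pos_of_ne_zero h), sq_nonneg (deriv u t)]
  have hwpos : 0 < speedSG r u v t := Real.sqrt_pos.mpr hw2pos
  have hwne : speedSG r u v t ≠ 0 := ne_of_gt hwpos
  have hw2 : speedSG r u v t ^ 2
      = (deriv u t) ^ 2 + (Real.cosh (u t / r)) ^ 2 * (deriv v t) ^ 2 :=
    Real.sq_sqrt hw2pos.le
  have hc2 : Real.cosh (u t / r) ^ 2 = Real.sinh (u t / r) ^ 2 + 1 := by
    linear_combination Real.cosh_sq_sub_sinh_sq (u t / r)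
  have hcv2 : Real.cosh (v t / r) ^ 2 = Real.sinh (v t / r) ^ 2 + 1 := by
    linear_combination Real.cosh_sq_sub_sinh_sq (v t / r)
  -- derivative of the speed
  have hws : HasDerivAt (speedSG r u v)
      ((deriv u t * deriv (deriv u) t
        + Real.cosh (u t / r) * Real.sinh (u t / r) * deriv u t * deriv v t ^ 2 / r
        + Real.cosh (u t / r) ^ 2 * deriv v t * deriv (deriv v) t) / speedSG r u v t) t := by
    have hQ := ((hu2 t).hasDerivAt.pow 2).add
      (((coshU r hu t).pow 2).mul ((hv2 t).hasDerivAt.pow 2))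
    have hsq : HasDerivAt (speedSG r u v) _ t := (Real.hasDerivAt_sqrt (ne_of_gt hw2pos)).comp t hQ
    simp only [Pi.pow_apply, Pi.mul_apply] at hsq
    convert hsq using 1
    have hsval : Real.sqrt ((deriv u t) ^ 2 + (Real.cosh (u t / r)) ^ 2 * (deriv v t) ^ 2)
        = speedSG r u v t := rfl
    rw [hsval]
    push_cast
    field_simp
    ring
  -- chain rule for f along the curve
  have hdf : DifferentiableAt ℝ (Function.uncurry f) (u t, v t) :=
    (hf.differentiable two_ne_zero).differentiableAt
  have hD := hdf.hasFDerivAt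
  have hcurve : HasDerivAt (fun s => ((u s : ℝ), (v s : ℝ))) (deriv u t, deriv v t) t :=
    ((hu t).hasDerivAt).prodMk ((hv t).hasDerivAt)
  have hphi0 : HasDerivAt (fun s => f (u s) (v s))
      ((fderiv ℝ (Function.uncurry f) (u t, v t)) (deriv u t, deriv v t)) t :=
    by have h := hD.comp_hasDerivAt t hcurve; exact h
  have hFuD : HasDerivAt (fun a => f a (v t))
      ((fderiv ℝ (Function.uncurry f) (u t, v t)) (1, 0)) (u t) :=
    by have h := hD.comp_hasDerivAt (u t) ((hasDerivAt_id (u t)).prodMk (hasDerivAt_const (u t) (v t))); exact h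
  have hFvD : HasDerivAt (fun b => f (u t) b)
      ((fderiv ℝ (Function.uncurry f) (u t, v t)) (0, 1)) (v t) :=
    by have h := hD.comp_hasDerivAt (v t) ((hasDerivAt_const (v t) (u t)).prodMk (hasDerivAt_id (v t))); exact h
  have hphi : HasDerivAt (fun s => f (u s) (v s))
      (deriv (fun a => f a (v t)) (u t) * deriv u t
        + deriv (fun b => f (u t) b) (v t) * deriv v t) t := by
    rw [hFuD.deriv, hFvD.deriv]
    have hsplit : (fderiv ℝ (Function.uncurry f) (u t, v t)) (deriv u t, deriv v t)
        = (fderiv ℝ (Function.uncurry f) (u t, v t)) (1, 0) * deriv u t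
          + (fderiv ℝ (Function.uncurry f) (u t, v t)) (0, 1) * deriv v t := by
      have hvec : ((deriv u t : ℝ), (deriv v t : ℝ))
          = deriv u t • ((1 : ℝ), (0 : ℝ)) + deriv v t • ((0 : ℝ), (1 : ℝ)) := by
        simp [Prod.ext_iff]
      rw [hvec, map_add, map_smul, map_smul, smul_eq_mul, smul_eq_mul]
      ring
    rw [← hsplit]
    exact hphi0
  -- derivative of cosh²(u/r)
  have hcosh2 : HasDerivAt (fun s => Real.cosh (u s / r) ^ 2)
      (2 * Real.cosh (u t / r) * Real.sinh (u t / r) * deriv u t / r) t := by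
    have h : HasDerivAt (fun s => Real.cosh (u s / r) ^ 2) _ t := (coshU r hu t).pow 2
    convert h using 1
    push_cast
    field_simp
  -- the two Euler–Lagrange right-hand sides
  have hD1 := (show HasDerivAt (fun s => f (u s) (v s) * deriv u s / speedSG r u v s) _ t from
    (hphi.mul (hu2 t).hasDerivAt).div hws hwne).deriv
  have hD2 := (show HasDerivAt (fun s =>
      f (u s) (v s) * deriv v s * (Real.cosh (u s / r)) ^ 2 / speedSG r u v s) _ t from
    (((hphi.mul (hv2 t).hasDerivAt).mul hcosh2).div hws hwne)).deriv
  rw [hD1, hD2]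
  -- curvature computation
  have hdx := (gX_hasDeriv hr' hu hv t).deriv
  have hdy := (gY_hasDeriv hr' hu hv t).deriv
  have hdz := (gZ_hasDeriv (v := v) hr' hu t).deriv
  have hddx := gX_dd hr' hu hu2 hv hv2 t
  have hddy := gY_dd hr' hu hu2 hv hv2 t
  have hddz := gZ_dd (v := v) hr' hu hu2 t
  have hsp : speed3 (gX r u v) (gY r u v) (gZ r u v) t = speedSG r u v t := by
    unfold speed3
    rw [hdx, hdy, hdz]
    rw [show -(Real.sinh (u t / r) * Real.cosh (v t / r) * deriv u t
          + Real.cosh (u t / r) * Real.sinh (v t / r) * deriv v t) ^ 2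
        + (Real.sinh (u t / r) * Real.sinh (v t / r) * deriv u t
          + Real.cosh (u t / r) * Real.cosh (v t / r) * deriv v t) ^ 2
        + (Real.cosh (u t / r) * deriv u t) ^ 2
        = (deriv u t) ^ 2 + (Real.cosh (u t / r)) ^ 2 * (deriv v t) ^ 2 from by
      linear_combination (deriv v t ^ 2 * Real.cosh (u t / r) ^ 2
        - deriv u t ^ 2 * Real.sinh (u t / r) ^ 2) * hcv2 + deriv u t ^ 2 * hc2]
    rfl
  have hK : kappaSG r u v t
      = (r * Real.cosh (u t / r) * (deriv (deriv u) t * deriv v t - deriv u t * deriv (deriv v) t)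
          - Real.sinh (u t / r) * deriv v t
            * (Real.cosh (u t / r) ^ 2 * deriv v t ^ 2 + 2 * deriv u t ^ 2))
        / (r * speedSG r u v t ^ 3) := by
    unfold kappaSG kappaH2
    rw [hsp, hdx, hdy, hdz]
    rw [show gX r u v t = r * Real.cosh (u t / r) * Real.cosh (v t / r) from rfl]
    rw [show gY r u v t = r * Real.cosh (u t / r) * Real.sinh (v t / r) from rfl]
    rw [show gZ r u v t = r * Real.sinh (u t / r) from rfl]
    have hM : r * Real.cosh (u t / r) * Real.cosh (v t / r)
          * (deriv (deriv (gY r u v)) t * (Real.cosh (u t / r) * deriv u t)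
            - (Real.sinh (u t / r) * Real.sinh (v t / r) * deriv u t
              + Real.cosh (u t / r) * Real.cosh (v t / r) * deriv v t)
              * deriv (deriv (gZ r u v)) t)
        - r * Real.cosh (u t / r) * Real.sinh (v t / r)
          * (deriv (deriv (gX r u v)) t * (Real.cosh (u t / r) * deriv u t)
            - (Real.sinh (u t / r) * Real.cosh (v t / r) * deriv u t
              + Real.cosh (u t / r) * Real.sinh (v t / r) * deriv v t)
              * deriv (deriv (gZ r u v)) t)
        + r * Real.sinh (u t / r)
          * (deriv (deriv (gX r u v)) t
              * (Real.sinh (u t / r) * Real.sinh (v t / r) * deriv u t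
                + Real.cosh (u t / r) * Real.cosh (v t / r) * deriv v t)
            - (Real.sinh (u t / r) * Real.cosh (v t / r) * deriv u t
              + Real.cosh (u t / r) * Real.sinh (v t / r) * deriv v t)
              * deriv (deriv (gY r u v)) t)
        = -(r * Real.cosh (u t / r) * (deriv (deriv u) t * deriv v t
              - deriv u t * deriv (deriv v) t)
            - Real.sinh (u t / r) * deriv v t
              * (Real.cosh (u t / r) ^ 2 * deriv v t ^ 2 + 2 * deriv u t ^ 2)) := by
      linear_combination
        (Real.sinh (u t / r) * (Real.sinh (u t / r) * Real.sinh (v t / r) * deriv u t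
            + Real.cosh (u t / r) * Real.cosh (v t / r) * deriv v t)
          - Real.cosh (u t / r) * Real.sinh (v t / r)
            * (Real.cosh (u t / r) * deriv u t)) * hddx
        + (Real.cosh (u t / r) * Real.cosh (v t / r) * (Real.cosh (u t / r) * deriv u t)
          - Real.sinh (u t / r) * (Real.sinh (u t / r) * Real.cosh (v t / r) * deriv u t
            + Real.cosh (u t / r) * Real.sinh (v t / r) * deriv v t)) * hddy
        + (-(Real.cosh (u t / r) * Real.cosh (v t / r)
            * (Real.sinh (u t / r) * Real.sinh (v t / r) * deriv u t
              + Real.cosh (u t / r) * Real.cosh (v t / r) * deriv v t))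
          + Real.cosh (u t / r) * Real.sinh (v t / r)
            * (Real.sinh (u t / r) * Real.cosh (v t / r) * deriv u t
              + Real.cosh (u t / r) * Real.sinh (v t / r) * deriv v t)) * hddz
        + (-(deriv v t * deriv (deriv u) t * Real.cosh (u t / r) ^ 3 * r)
          + deriv v t * deriv (deriv u) t * Real.sinh (u t / r) ^ 2 * Real.cosh (u t / r) * r
          + deriv v t ^ 3 * Real.sinh (u t / r) * Real.cosh (u t / r) ^ 2
          + deriv u t * deriv (deriv v) t * Real.cosh (u t / r) ^ 3 * r
          - deriv u t * deriv (deriv v) t * Real.sinh (u t / r) ^ 2 * Real.cosh (u t / r) * r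
          + 2 * deriv u t ^ 2 * deriv v t * Real.sinh (u t / r) * Real.cosh (u t / r) ^ 2
          - 2 * deriv u t ^ 2 * deriv v t * Real.sinh (u t / r) ^ 3) * hcv2
        + (-(deriv v t * deriv (deriv u) t * Real.cosh (u t / r) * r)
          + deriv u t * deriv (deriv v) t * Real.cosh (u t / r) * r
          + 2 * deriv u t ^ 2 * deriv v t * Real.sinh (u t / r)) * hc2
    rw [hM, neg_neg]
  -- the normal–gradient inner product
  have hm : mink3 (unitNormal r u v t)
      ((deriv (fun a => f a (v t)) (u t)) • psiU r (u t) (v t)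
        + (deriv (fun b => f (u t) b) (v t) / (Real.cosh (u t / r)) ^ 2) • psiV r (u t) (v t))
      = (deriv v t * Real.cosh (u t / r) ^ 2 * deriv (fun a => f a (v t)) (u t)
          - deriv u t * deriv (fun b => f (u t) b) (v t))
        / (Real.cosh (u t / r) * speedSG r u v t) * (-1) := by
    simp only [mink3, unitNormal, psiU, psiV, Prod.smul_mk, Prod.mk_add_mk, smul_eq_mul,
      mul_zero, add_zero]
    set A := deriv u t with hA
    set B := deriv v t with hB
    set S := Real.sinh (u t / r) with hS
    set C := Real.cosh (u t / r) with hC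
    set SV := Real.sinh (v t / r) with hSV
    set CV := Real.cosh (v t / r) with hCV
    set W := speedSG r u v t with hW
    set FU := deriv (fun a => f a (v t)) (u t) with hFU
    set FV := deriv (fun b => f (u t) b) (v t) with hFV
    field_simp
    linear_combination (B * C ^ 2 * S ^ 2 * FU + A * FV) * hcv2
      - B * C ^ 2 * FU * hc2
  have hT : -(mink3 (unitNormal r u v t)
        ((deriv (fun a => f a (v t)) (u t)) • psiU r (u t) (v t)
          + (deriv (fun b => f (u t) b) (v t) / (Real.cosh (u t / r)) ^ 2) •
            psiV r (u t) (v t))) / f (u t) (v t)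
      = (deriv v t * Real.cosh (u t / r) ^ 2 * deriv (fun a => f a (v t)) (u t)
          - deriv u t * deriv (fun b => f (u t) b) (v t))
        / (Real.cosh (u t / r) * speedSG r u v t * f (u t) (v t)) := by
    rw [hm]
    field_simp
  exact alg_core r (deriv u t) (deriv v t) (deriv (deriv u) t) (deriv (deriv v) t)
    (Real.sinh (u t / r)) (Real.cosh (u t / r)) (f (u t) (v t))
    (deriv (fun a => f a (v t)) (u t)) (deriv (fun b => f (u t) b) (v t))
    (speedSG r u v t) _ _ hr' hwpos hFne hcne hw2 hK hT
end
end

section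
/- Let r > 0 and let u, v : ℝ → ℝ be twice differentiable with u(t) > 0 and (u̇, v̇) ≠ (0,0) for all t. For γ(t) = ψ(u(t), v(t)), let n(t) = (1/‖γ̇‖)·(−v̇ cosh(u/r)·ψ_u + (u̇/cosh(u/r))·ψ_v) be the unit normal, where ψ_u = (sinh(u/r)cosh(v/r), sinh(u/r)sinh(v/r), cosh(u/r)) and ψ_v = (cosh(u/r)sinh(v/r), cosh(u/r)cosh(v/r), 0). Then γ is an extrinsic catenary of elliptic type (satisfies the Euler–Lagrange equations with f(u,v) = sinh(u/r)) if and only if its geodesic curvature κ in H²(r) satisfies κ(t) = −⟨n(t), (0,0,1)⟩₁ / (r sinh(u(t)/r)) for all t; here (0,0,1) is the Killing vector field of translations along the geodesics of E₁³ joining γ to the Lorentzian plane spanned by e_x and e_y, and r sinh(u/r) is the distance from γ(t) to that plane. -/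
noncomputable section
open Real

section Aux
variable {r : ℝ} {u v : ℝ → ℝ}

lemma hda_cu (hu : Differentiable ℝ u) (t : ℝ) :
    HasDerivAt (fun τ => Real.cosh (u τ / r)) (Real.sinh (u t / r) * (deriv u t / r)) t :=
  ((hu t).hasDerivAt.div_const r).cosh

lemma hda_su (hu : Differentiable ℝ u) (t : ℝ) :
    HasDerivAt (fun τ => Real.sinh (u τ / r)) (Real.cosh (u t / r) * (deriv u t / r)) t :=
  ((hu t).hasDerivAt.div_const r).sinh

lemma hda_gX (hr : r ≠ 0) (hu : Differentiable ℝ u) (hv : Differentiable ℝ v) (t : ℝ) :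
    HasDerivAt (gX r u v)
      (Real.sinh (u t / r) * Real.cosh (v t / r) * deriv u t
        + Real.cosh (u t / r) * Real.sinh (v t / r) * deriv v t) t := by
  have h := ((hda_cu (r := r) hu t).const_mul r).mul (hda_cu (r := r) hv t)
  refine h.congr_deriv ?_
  field_simp

lemma hda_gY (hr : r ≠ 0) (hu : Differentiable ℝ u) (hv : Differentiable ℝ v) (t : ℝ) :
    HasDerivAt (gY r u v)
      (Real.sinh (u t / r) * Real.sinh (v t / r) * deriv u t
        + Real.cosh (u t / r) * Real.cosh (v t / r) * deriv v t) t := by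
  have h := ((hda_cu (r := r) hu t).const_mul r).mul (hda_su (r := r) hv t)
  refine h.congr_deriv ?_
  field_simp

lemma hda_gZ (hr : r ≠ 0) (hu : Differentiable ℝ u) (t : ℝ) :
    HasDerivAt (gZ r u v) (Real.cosh (u t / r) * deriv u t) t := by
  have h := (hda_su (r := r) hu t).const_mul r
  refine h.congr_deriv ?_
  field_simp

end Aux
section Aux2
variable {r : ℝ} {u v : ℝ → ℝ}

lemma hda_gX' (hr : r ≠ 0) (hu : Differentiable ℝ u) (hu2 : Differentiable ℝ (deriv u))
    (hv : Differentiable ℝ v) (hv2 : Differentiable ℝ (deriv v)) (t : ℝ) :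
    HasDerivAt (fun τ => Real.sinh (u τ / r) * Real.cosh (v τ / r) * deriv u τ
        + Real.cosh (u τ / r) * Real.sinh (v τ / r) * deriv v τ)
      ((Real.cosh (u t / r) * deriv u t ^ 2 * Real.cosh (v t / r)
          + 2 * Real.sinh (u t / r) * deriv u t * Real.sinh (v t / r) * deriv v t
          + Real.cosh (u t / r) * Real.cosh (v t / r) * deriv v t ^ 2) / r
        + Real.sinh (u t / r) * deriv (deriv u) t * Real.cosh (v t / r)
        + Real.cosh (u t / r) * Real.sinh (v t / r) * deriv (deriv v) t) t := by
  have h := (((hda_su (r := r) hu t).mul (hda_cu (r := r) hv t)).mul (hu2 t).hasDerivAt).add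
    (((hda_cu (r := r) hu t).mul (hda_su (r := r) hv t)).mul (hv2 t).hasDerivAt)
  refine h.congr_deriv ?_
  simp only [Pi.mul_apply, Pi.add_apply, Pi.pow_apply, Pi.div_apply]
  field_simp
  ring

lemma hda_gY' (hr : r ≠ 0) (hu : Differentiable ℝ u) (hu2 : Differentiable ℝ (deriv u))
    (hv : Differentiable ℝ v) (hv2 : Differentiable ℝ (deriv v)) (t : ℝ) :
    HasDerivAt (fun τ => Real.sinh (u τ / r) * Real.sinh (v τ / r) * deriv u τ
        + Real.cosh (u τ / r) * Real.cosh (v τ / r) * deriv v τ)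
      ((Real.cosh (u t / r) * deriv u t ^ 2 * Real.sinh (v t / r)
          + 2 * Real.sinh (u t / r) * deriv u t * Real.cosh (v t / r) * deriv v t
          + Real.cosh (u t / r) * Real.sinh (v t / r) * deriv v t ^ 2) / r
        + Real.sinh (u t / r) * deriv (deriv u) t * Real.sinh (v t / r)
        + Real.cosh (u t / r) * Real.cosh (v t / r) * deriv (deriv v) t) t := by
  have h := (((hda_su (r := r) hu t).mul (hda_su (r := r) hv t)).mul (hu2 t).hasDerivAt).add
    (((hda_cu (r := r) hu t).mul (hda_cu (r := r) hv t)).mul (hv2 t).hasDerivAt)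
  refine h.congr_deriv ?_
  simp only [Pi.mul_apply, Pi.add_apply, Pi.pow_apply, Pi.div_apply]
  field_simp
  ring

lemma hda_gZ' (hr : r ≠ 0) (hu : Differentiable ℝ u) (hu2 : Differentiable ℝ (deriv u)) (t : ℝ) :
    HasDerivAt (fun τ => Real.cosh (u τ / r) * deriv u τ)
      (Real.sinh (u t / r) * deriv u t ^ 2 / r + Real.cosh (u t / r) * deriv (deriv u) t) t := by
  have h := (hda_cu (r := r) hu t).mul (hu2 t).hasDerivAt
  refine h.congr_deriv ?_
  field_simp

lemma warg_pos {t0 : ℝ} (hreg : (deriv u t0, deriv v t0) ≠ (0, 0)) :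
    0 < deriv u t0 ^ 2 + Real.cosh (u t0 / r) ^ 2 * deriv v t0 ^ 2 := by
  have hc : 0 < Real.cosh (u t0 / r) := Real.cosh_pos _
  by_cases hp : deriv u t0 = 0
  · have hq : deriv v t0 ≠ 0 := fun hq => hreg (by rw [hp, hq])
    have h2 : 0 < deriv v t0 ^ 2 := by rcases hq.lt_or_gt with h | h <;> nlinarith
    nlinarith [sq_nonneg (deriv u t0), mul_pos (pow_pos hc 2) h2]
  · have h2 : 0 < deriv u t0 ^ 2 := by rcases lt_or_gt_of_ne hp with h | h <;> nlinarith
    nlinarith [sq_nonneg (Real.cosh (u t0 / r) * deriv v t0)]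

lemma hda_w (hr : r ≠ 0) (hu : Differentiable ℝ u) (hu2 : Differentiable ℝ (deriv u))
    (hv : Differentiable ℝ v) (hv2 : Differentiable ℝ (deriv v)) (t : ℝ)
    (hreg : (deriv u t, deriv v t) ≠ (0, 0)) :
    HasDerivAt (speedSG r u v)
      ((deriv u t * deriv (deriv u) t
          + Real.sinh (u t / r) * Real.cosh (u t / r) * deriv u t * deriv v t ^ 2 / r
          + Real.cosh (u t / r) ^ 2 * deriv v t * deriv (deriv v) t) / speedSG r u v t) t := by
  have harg : 0 < deriv u t ^ 2 + Real.cosh (u t / r) ^ 2 * deriv v t ^ 2 := warg_pos hreg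
  have hw0 : speedSG r u v t ≠ 0 := ne_of_gt (Real.sqrt_pos.mpr harg)
  have hinner := (((hu2 t).hasDerivAt).pow 2).add
    (((hda_cu (r := r) hu t).pow 2).mul (((hv2 t).hasDerivAt).pow 2))
  have h := hinner.sqrt (ne_of_gt harg)
  refine h.congr_deriv ?_
  · unfold speedSG
    simp only [Pi.mul_apply, Pi.add_apply, Pi.pow_apply, Pi.div_apply]
    field_simp
    ring
end Aux2
section Aux3
variable {r : ℝ} {u v : ℝ → ℝ}

lemma hda_F1 (hr : r ≠ 0) (hu : Differentiable ℝ u) (hu2 : Differentiable ℝ (deriv u))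
    (hv : Differentiable ℝ v) (hv2 : Differentiable ℝ (deriv v)) (t : ℝ)
    (hreg : (deriv u t, deriv v t) ≠ (0, 0)) :
    HasDerivAt (fun τ => Real.sinh (u τ / r) * deriv u τ / speedSG r u v τ)
      ((speedSG r u v t ^ 2 * (Real.cosh (u t / r) * deriv u t ^ 2
            + r * Real.sinh (u t / r) * deriv (deriv u) t)
          - Real.sinh (u t / r) * deriv u t * (r * deriv u t * deriv (deriv u) t
            + Real.sinh (u t / r) * Real.cosh (u t / r) * deriv u t * deriv v t ^ 2
            + r * Real.cosh (u t / r) ^ 2 * deriv v t * deriv (deriv v) t))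
        / (r * speedSG r u v t ^ 3)) t := by
  have harg : 0 < deriv u t ^ 2 + Real.cosh (u t / r) ^ 2 * deriv v t ^ 2 :=
    warg_pos (r := r) hreg
  have hw0 : speedSG r u v t ≠ 0 := ne_of_gt (Real.sqrt_pos.mpr harg)
  have h := (((hda_su (r := r) hu t).mul (hu2 t).hasDerivAt).div
    (hda_w hr hu hu2 hv hv2 t hreg) hw0)
  refine h.congr_deriv ?_
  simp only [Pi.mul_apply, Pi.add_apply, Pi.pow_apply, Pi.div_apply]
  field_simp

lemma hda_F2 (hr : r ≠ 0) (hu : Differentiable ℝ u) (hu2 : Differentiable ℝ (deriv u))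
    (hv : Differentiable ℝ v) (hv2 : Differentiable ℝ (deriv v)) (t : ℝ)
    (hreg : (deriv u t, deriv v t) ≠ (0, 0)) :
    HasDerivAt (fun τ => Real.sinh (u τ / r) * deriv v τ * Real.cosh (u τ / r) ^ 2
        / speedSG r u v τ)
      ((speedSG r u v t ^ 2 * (Real.cosh (u t / r) ^ 3 * deriv u t * deriv v t
            + 2 * Real.sinh (u t / r) ^ 2 * Real.cosh (u t / r) * deriv u t * deriv v t
            + r * Real.sinh (u t / r) * Real.cosh (u t / r) ^ 2 * deriv (deriv v) t)
          - Real.sinh (u t / r) * deriv v t * Real.cosh (u t / r) ^ 2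
            * (r * deriv u t * deriv (deriv u) t
              + Real.sinh (u t / r) * Real.cosh (u t / r) * deriv u t * deriv v t ^ 2
              + r * Real.cosh (u t / r) ^ 2 * deriv v t * deriv (deriv v) t))
        / (r * speedSG r u v t ^ 3)) t := by
  have harg : 0 < deriv u t ^ 2 + Real.cosh (u t / r) ^ 2 * deriv v t ^ 2 :=
    warg_pos (r := r) hreg
  have hw0 : speedSG r u v t ≠ 0 := ne_of_gt (Real.sqrt_pos.mpr harg)
  have h := ((((hda_su (r := r) hu t).mul (hv2 t).hasDerivAt).mul
      ((hda_cu (r := r) hu t).pow 2)).div (hda_w hr hu hu2 hv hv2 t hreg) hw0)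
  refine h.congr_deriv ?_
  simp only [Pi.mul_apply, Pi.add_apply, Pi.pow_apply, Pi.div_apply]
  field_simp
  ring

end Aux3
lemma main_iff (r : ℝ) (hr : 0 < r) (u v : ℝ → ℝ) (hupos : ∀ t : ℝ, 0 < u t)
    (hu : Differentiable ℝ u) (hu2 : Differentiable ℝ (deriv u))
    (hv : Differentiable ℝ v) (hv2 : Differentiable ℝ (deriv v))
    (hreg : ∀ t : ℝ, (deriv u t, deriv v t) ≠ (0, 0)) (t : ℝ) :
    ((deriv (fun a => Real.sinh (a / r)) (u t) * speedSG r u v t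
        + Real.sinh (u t / r) * Real.sinh (u t / r) * Real.cosh (u t / r) * (deriv v t) ^ 2
          / (r * speedSG r u v t)
      = deriv (fun s => Real.sinh (u s / r) * deriv u s / speedSG r u v s) t)
     ∧ (deriv (fun b => Real.sinh (u t / r)) (v t) * speedSG r u v t
      = deriv (fun s =>
          Real.sinh (u s / r) * deriv v s * (Real.cosh (u s / r)) ^ 2 / speedSG r u v s) t))
    ↔ kappaSG r u v t
        = -(mink3 (unitNormal r u v t) ((0, 0, 1) : ℝ × ℝ × ℝ))
          / (r * Real.sinh (u t / r)) := by
  have hr0 : r ≠ 0 := ne_of_gt hr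
  have hrt := hreg t
  have hs : 0 < Real.sinh (u t / r) := Real.sinh_pos_iff.mpr (div_pos (hupos t) hr)
  have hc0 : 0 < Real.cosh (u t / r) := Real.cosh_pos _
  have harg : 0 < deriv u t ^ 2 + Real.cosh (u t / r) ^ 2 * deriv v t ^ 2 :=
    warg_pos (r := r) hrt
  have hwpos : 0 < speedSG r u v t := Real.sqrt_pos.mpr harg
  have hw0 : speedSG r u v t ≠ 0 := ne_of_gt hwpos
  have hw2 : speedSG r u v t ^ 2 = deriv u t ^ 2 + Real.cosh (u t / r) ^ 2 * deriv v t ^ 2 :=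
    Real.sq_sqrt harg.le
  have hrw3 : r * speedSG r u v t ^ 3 ≠ 0 := mul_ne_zero hr0 (pow_ne_zero 3 hw0)
  have hrs0 : r * Real.sinh (u t / r) ≠ 0 := mul_ne_zero hr0 (ne_of_gt hs)
  -- derivative of a ↦ sinh (a/r)
  have hfu : deriv (fun a => Real.sinh (a / r)) (u t) = Real.cosh (u t / r) / r := by
    have h : HasDerivAt (fun a : ℝ => Real.sinh (a / r))
        (Real.cosh (u t / r) * (1 / r)) (u t) :=
      HasDerivAt.sinh (HasDerivAt.div_const (hasDerivAt_id (u t)) r)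
    rw [h.deriv]; ring
  have hfv : deriv (fun _ : ℝ => Real.sinh (u t / r)) (v t) = 0 := deriv_const _ _
  have hF1 := (hda_F1 hr0 hu hu2 hv hv2 t hrt).deriv
  have hF2 := (hda_F2 hr0 hu hu2 hv hv2 t hrt).deriv
  -- first derivatives of the curve components
  have hx1 : deriv (gX r u v) = fun τ => Real.sinh (u τ / r) * Real.cosh (v τ / r) * deriv u τ
      + Real.cosh (u τ / r) * Real.sinh (v τ / r) * deriv v τ :=
    funext fun τ => (hda_gX hr0 hu hv τ).deriv
  have hy1 : deriv (gY r u v) = fun τ => Real.sinh (u τ / r) * Real.sinh (v τ / r) * deriv u τ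
      + Real.cosh (u τ / r) * Real.cosh (v τ / r) * deriv v τ :=
    funext fun τ => (hda_gY hr0 hu hv τ).deriv
  have hz1 : deriv (gZ r u v) = fun τ => Real.cosh (u τ / r) * deriv u τ :=
    funext fun τ => (hda_gZ hr0 hu τ).deriv
  have hx2 : deriv (deriv (gX r u v)) t = (Real.cosh (u t / r) * deriv u t ^ 2 * Real.cosh (v t / r)
      + 2 * Real.sinh (u t / r) * deriv u t * Real.sinh (v t / r) * deriv v t
      + Real.cosh (u t / r) * Real.cosh (v t / r) * deriv v t ^ 2) / r
      + Real.sinh (u t / r) * deriv (deriv u) t * Real.cosh (v t / r)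
      + Real.cosh (u t / r) * Real.sinh (v t / r) * deriv (deriv v) t := by
    rw [hx1]; exact (hda_gX' hr0 hu hu2 hv hv2 t).deriv
  have hy2 : deriv (deriv (gY r u v)) t = (Real.cosh (u t / r) * deriv u t ^ 2 * Real.sinh (v t / r)
      + 2 * Real.sinh (u t / r) * deriv u t * Real.cosh (v t / r) * deriv v t
      + Real.cosh (u t / r) * Real.sinh (v t / r) * deriv v t ^ 2) / r
      + Real.sinh (u t / r) * deriv (deriv u) t * Real.sinh (v t / r)
      + Real.cosh (u t / r) * Real.cosh (v t / r) * deriv (deriv v) t := by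
    rw [hy1]; exact (hda_gY' hr0 hu hu2 hv hv2 t).deriv
  have hz2 : deriv (deriv (gZ r u v)) t = Real.sinh (u t / r) * deriv u t ^ 2 / r
      + Real.cosh (u t / r) * deriv (deriv u) t := by
    rw [hz1]; exact (hda_gZ' hr0 hu hu2 t).deriv
  have hx1t := congrFun hx1 t
  have hy1t := congrFun hy1 t
  have hz1t := congrFun hz1 t
  beta_reduce at hx1t hy1t hz1t
  have hcc : Real.cosh (u t / r) ^ 2 = Real.sinh (u t / r) ^ 2 + 1 := Real.cosh_sq (u t / r)
  have hCC : Real.cosh (v t / r) ^ 2 = Real.sinh (v t / r) ^ 2 + 1 := Real.cosh_sq (v t / r)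
  have hsp : speed3 (gX r u v) (gY r u v) (gZ r u v) t = speedSG r u v t := by
    unfold speed3 speedSG
    rw [hx1t, hy1t, hz1t]
    congr 1
    linear_combination (deriv u t) ^ 2 * hcc
      + (Real.cosh (u t / r) ^ 2 * (deriv v t) ^ 2
        - Real.sinh (u t / r) ^ 2 * (deriv u t) ^ 2) * hCC
  have hkap : kappaSG r u v t
      = -(2 * Real.sinh (u t / r) * deriv u t ^ 2 * deriv v t
          + Real.sinh (u t / r) * Real.cosh (u t / r) ^ 2 * deriv v t ^ 3
          + r * Real.cosh (u t / r) * (deriv u t * deriv (deriv v) t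
            - deriv v t * deriv (deriv u) t))
        / (r * speedSG r u v t ^ 3) := by
    unfold kappaSG kappaH2
    rw [hx2, hy2, hz2, hx1t, hy1t, hz1t, hsp]
    simp only [gX, gY, gZ]
    congr 1
    field_simp
    ring_nf
    have hcc' : Real.cosh (u t * r⁻¹) ^ 2 = Real.sinh (u t * r⁻¹) ^ 2 + 1 := Real.cosh_sq _
    have hCC' : Real.cosh (r⁻¹ * v t) ^ 2 = Real.sinh (r⁻¹ * v t) ^ 2 + 1 := Real.cosh_sq _
    linear_combination ((-1 : ℝ) * Real.cosh (u t * r⁻¹) * Real.cosh (r⁻¹ * v t) ^ 2 * deriv (deriv v) t * deriv u t * r + (1 : ℝ) * Real.cosh (u t * r⁻¹) * Real.cosh (r⁻¹ * v t) ^ 2 * deriv (deriv u) t * deriv v t * r + (1 : ℝ) * Real.cosh (u t * r⁻¹) * Real.sinh (r⁻¹ * v t) ^ 2 * deriv (deriv v) t * deriv u t * r + (-1 : ℝ) * Real.cosh (u t * r⁻¹) * Real.sinh (r⁻¹ * v t) ^ 2 * deriv (deriv u) t * deriv v t * r + (-2 : ℝ) * Real.sinh (u t * r⁻¹) * Real.cosh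 (r⁻¹ * v t) ^ 2 * deriv u t ^ 2 * deriv v t + (-1 : ℝ) * Real.sinh (u t * r⁻¹) * Real.cosh (r⁻¹ * v t) ^ 2 * deriv v t ^ 3 + (2 : ℝ) * Real.sinh (u t * r⁻¹) * Real.sinh (r⁻¹ * v t) ^ 2 * deriv u t ^ 2 * deriv v t + (1 : ℝ) * Real.sinh (u t * r⁻¹) * Real.sinh (r⁻¹ * v t) ^ 2 * deriv v t ^ 3 + (1 : ℝ) * Real.sinh (u t * r⁻¹) * deriv v t ^ 3) * hcc' + ((-1 : ℝ) * Real.cosh (u t * r⁻¹) * deriv (deriv v) t * deriv u t * r + (1 : ℝ) * Real.cosh (u t * r⁻¹) * deriv (deriv u) t * deriv v t * r + (-2 : ℝ) * Real.sinh (u t * r⁻¹) * deriv u t ^ 2 * deriv v t + (-1 : ℝ) * Real.sinh (u t * r⁻¹) ^ 3 * deriv v t ^ 3 + (-1 : ℝ) * Real.sinh (u t * r⁻¹) * deriv v t ^ 3) * hCC'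
  have hmink : mink3 (unitNormal r u v t) ((0, 0, 1) : ℝ × ℝ × ℝ)
      = -(deriv v t * Real.cosh (u t / r) ^ 2) / speedSG r u v t := by
    simp only [unitNormal, psiU, psiV, mink3, Prod.smul_mk, Prod.mk_add_mk, smul_eq_mul]
    ring
  rw [hfu, hfv, hF1, hF2, hkap, hmink]
  set c := Real.cosh (u t / r) with hcdef
  set sh := Real.sinh (u t / r) with hsdef
  set p := deriv u t with hpdef
  set q := deriv v t with hqdef
  set P := deriv (deriv u) t with hPdef
  set Q := deriv (deriv v) t with hQdef
  set w := speedSG r u v t with hwdef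
  constructor
  · rintro ⟨h1, h2⟩
    rw [eq_div_iff hrw3] at h1
    rw [show (c / r * w + sh * sh * c * q ^ 2 / (r * w)) * (r * w ^ 3)
        = c * w ^ 4 + sh ^ 2 * c * q ^ 2 * w ^ 2 from by field_simp] at h1
    have h2' : w ^ 2 * (c ^ 3 * p * q + 2 * sh ^ 2 * c * p * q + r * sh * c ^ 2 * Q)
        - sh * q * c ^ 2 * (r * p * P + sh * c * p * q ^ 2 + r * c ^ 2 * q * Q) = 0 := by
      rw [zero_mul, eq_comm, div_eq_zero_iff] at h2
      exact h2.resolve_right hrw3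
    have hDq : c * q * (q * p ^ 2 * (c ^ 2 + 2 * sh ^ 2) + q ^ 3 * c ^ 2 * (c ^ 2 + sh ^ 2)
        - r * sh * c * (q * P - p * Q)) = 0 := by
      linear_combination h1 + (-(c * w ^ 2) - c * sh ^ 2 * q ^ 2 - c ^ 3 * q ^ 2 + r * sh * P) * hw2
    have hDp : c * p * (q * p ^ 2 * (c ^ 2 + 2 * sh ^ 2) + q ^ 3 * c ^ 2 * (c ^ 2 + sh ^ 2)
        - r * sh * c * (q * P - p * Q)) = 0 := by
      linear_combination h2' - (2 * c * sh ^ 2 * p * q + c ^ 3 * p * q + r * c ^ 2 * sh * Q) * hw2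
    have hD : q * p ^ 2 * (c ^ 2 + 2 * sh ^ 2) + q ^ 3 * c ^ 2 * (c ^ 2 + sh ^ 2)
        - r * sh * c * (q * P - p * Q) = 0 := by
      by_contra hD
      have hq0 : q = 0 := by
        rcases mul_eq_zero.mp hDq with h | h
        · rcases mul_eq_zero.mp h with h' | h'
          · exact absurd h' (ne_of_gt hc0)
          · exact h'
        · exact absurd h hD
      have hp0 : p = 0 := by
        rcases mul_eq_zero.mp hDp with h | h
        · rcases mul_eq_zero.mp h with h' | h'
          · exact absurd h' (ne_of_gt hc0)
          · exact h'
        · exact absurd h hD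
      exact hrt (by rw [hp0, hq0])
    rw [div_eq_div_iff hrw3 hrs0]
    rw [show -(-(q * c ^ 2) / w) * (r * w ^ 3) = q * c ^ 2 * r * w ^ 2 from by field_simp]
    linear_combination (-r) * hD + (-(q * c ^ 2 * r)) * hw2
  · intro h
    rw [div_eq_div_iff hrw3 hrs0, show -(-(q * c ^ 2) / w) * (r * w ^ 3)
      = q * c ^ 2 * r * w ^ 2 from by field_simp] at h
    have hrD : r * (q * p ^ 2 * (c ^ 2 + 2 * sh ^ 2) + q ^ 3 * c ^ 2 * (c ^ 2 + sh ^ 2)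
        - r * sh * c * (q * P - p * Q)) = 0 := by
      linear_combination (-1 : ℝ) * h + (-(q * c ^ 2 * r)) * hw2
    have hD : q * p ^ 2 * (c ^ 2 + 2 * sh ^ 2) + q ^ 3 * c ^ 2 * (c ^ 2 + sh ^ 2)
        - r * sh * c * (q * P - p * Q) = 0 := by
      rcases mul_eq_zero.mp hrD with h' | h'
      · exact absurd h' hr0
      · exact h'
    constructor
    · rw [eq_div_iff hrw3, show (c / r * w + sh * sh * c * q ^ 2 / (r * w)) * (r * w ^ 3)
        = c * w ^ 4 + sh ^ 2 * c * q ^ 2 * w ^ 2 from by field_simp]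
      linear_combination c * q * hD
        + (c * w ^ 2 + c * sh ^ 2 * q ^ 2 + c ^ 3 * q ^ 2 - r * sh * P) * hw2
    · rw [zero_mul, eq_comm, div_eq_zero_iff]
      left
      linear_combination c * p * hD
        + (2 * c * sh ^ 2 * p * q + c ^ 3 * p * q + r * c ^ 2 * sh * Q) * hw2
/-- Killing field characterization of extrinsic catenaries of
elliptic type: `κ = −⟨n, e_z⟩₁ / (r sinh(u/r))`. -/
theorem extrinsic_catenary_elliptic_iff_killing (r : ℝ) (hr : 0 < r) (u v : ℝ → ℝ)
    (hupos : ∀ t : ℝ, 0 < u t)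
    (hu : Differentiable ℝ u) (hu2 : Differentiable ℝ (deriv u))
    (hv : Differentiable ℝ v) (hv2 : Differentiable ℝ (deriv v))
    (hreg : ∀ t : ℝ, (deriv u t, deriv v t) ≠ (0, 0)) :
    EulerLagrange r (fun a _ => Real.sinh (a / r)) u v ↔
      ∀ t : ℝ,
        kappaSG r u v t
          = -(mink3 (unitNormal r u v t) ((0, 0, 1) : ℝ × ℝ × ℝ))
            / (r * Real.sinh (u t / r)) := by
  constructor
  · intro h t
    exact (main_iff r hr u v hupos hu hu2 hv hv2 hreg t).mp (h t)
  · intro h t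
    exact (main_iff r hr u v hupos hu hu2 hv hv2 hreg t).mpr (h t)
end
end

section
/- Let r > 0 and let u, v : ℝ → ℝ be twice differentiable with (u̇, v̇) ≠ (0,0) for all t. For γ(t) = ψ(u(t), v(t)), let n(t) = (1/‖γ̇‖)·(−v̇ cosh(u/r)·ψ_u + (u̇/cosh(u/r))·ψ_v) be the unit normal, where ψ_u = (sinh(u/r)cosh(v/r), sinh(u/r)sinh(v/r), cosh(u/r)) and ψ_v = (cosh(u/r)sinh(v/r), cosh(u/r)cosh(v/r), 0). Then γ is an extrinsic catenary of hyperbolic type (satisfies the Euler–Lagrange equations with f(u,v) = cosh(u/r)cosh(v/r)) if and only if its geodesic curvature κ in H²(r) satisfies κ(t) = −⟨n(t), (−1,0,0)⟩₁ / (r cosh(u(t)/r)cosh(v(t)/r)) for all t; here (−1,0,0) is the Killing vector field associated to the Riemannian plane spanned by e_y and e_z, and r cosh(u/r)cosh(v/r) is the distance from γ(t) to that plane. -/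
noncomputable section
open Real

private lemma HasDerivAt.congr_d {f : ℝ → ℝ} {a b x : ℝ} (h : HasDerivAt f a x)
    (hab : a = b) : HasDerivAt f b x := hab ▸ h

/-- Cleared form of the first Euler–Lagrange expression. -/
private def E1e (r U V P Q c sh Cv Sv sp : ℝ) : ℝ :=
  sh*Cv/r*sp^4 + c^2*sh*Cv*V^2*sp^2/r - (sh*Cv*U^2/r + c*Sv*U*V/r + c*Cv*P)*sp^2
    + c*Cv*U*(U*P + c*sh*U*V^2/r + c^2*V*Q)

/-- Cleared form of the second Euler–Lagrange expression. -/
private def E2e (r U V P Q c sh Cv Sv sp : ℝ) : ℝ :=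
  c*Sv/r*sp^4 - (3*c^2*sh*U*Cv*V/r + c^3*Sv*V^2/r + c^3*Cv*Q)*sp^2
    + c^3*Cv*V*(U*P + c*sh*U*V^2/r + c^2*V*Q)

/-- Cleared form of the curvature (Killing) equation. -/
private def Ke (r U V P Q c sh Cv Sv : ℝ) : ℝ :=
  c^2*Cv*(V*P - U*Q) - 2*c^3*sh*Cv*V^3/r + c^2*Sv*U*V^2/r - 3*c*sh*Cv*U^2*V/r + Sv*U^3/r

private lemma alg1 (r U V P Q c sh Cv Sv sp : ℝ) (hG : sp^2 = U^2 + c^2*V^2) :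
    E1e r U V P Q c sh Cv Sv sp = -(c*V) * Ke r U V P Q c sh Cv Sv := by
  simp only [E1e, Ke]
  linear_combination (sh*Cv/r*sp^2 - P*c*Cv + 2*V^2*c^2*sh*Cv/r - U*V*c*Sv/r) * hG

private lemma alg2 (r U V P Q c sh Cv Sv sp : ℝ) (hG : sp^2 = U^2 + c^2*V^2) :
    E2e r U V P Q c sh Cv Sv sp = (c*U) * Ke r U V P Q c sh Cv Sv := by
  simp only [E2e, Ke]
  linear_combination (c*Sv/r*sp^2 - Q*c^3*Cv - 3*U*V*c^2*sh*Cv/r + U^2*c*Sv/r) * hG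

set_option maxHeartbeats 4000000 in
/-- Killing field characterization of extrinsic catenaries of
hyperbolic type: `κ = −⟨n, −e_x⟩₁ / (r cosh(u/r) cosh(v/r))`. -/
theorem extrinsic_catenary_hyperbolic_iff_killing (r : ℝ) (hr : 0 < r) (u v : ℝ → ℝ)
    (hu : Differentiable ℝ u) (hu2 : Differentiable ℝ (deriv u))
    (hv : Differentiable ℝ v) (hv2 : Differentiable ℝ (deriv v))
    (hreg : ∀ t : ℝ, (deriv u t, deriv v t) ≠ (0, 0)) :
    EulerLagrange r (fun a b => Real.cosh (a / r) * Real.cosh (b / r)) u v ↔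
      ∀ t : ℝ,
        kappaSG r u v t
          = -(mink3 (unitNormal r u v t) ((-1, 0, 0) : ℝ × ℝ × ℝ))
            / (r * Real.cosh (u t / r) * Real.cosh (v t / r)) := by
  have hchuS : ∀ s : ℝ, HasDerivAt (fun w => Real.cosh (u w / r))
      (Real.sinh (u s / r) * (deriv u s / r)) s := fun s => ((hu s).hasDerivAt.div_const r).cosh
  have hshuS : ∀ s : ℝ, HasDerivAt (fun w => Real.sinh (u w / r))
      (Real.cosh (u s / r) * (deriv u s / r)) s := fun s => ((hu s).hasDerivAt.div_const r).sinh
  have hchvS : ∀ s : ℝ, HasDerivAt (fun w => Real.cosh (v w / r))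
      (Real.sinh (v s / r) * (deriv v s / r)) s := fun s => ((hv s).hasDerivAt.div_const r).cosh
  have hshvS : ∀ s : ℝ, HasDerivAt (fun w => Real.sinh (v w / r))
      (Real.cosh (v s / r) * (deriv v s / r)) s := fun s => ((hv s).hasDerivAt.div_const r).sinh
  have hdgX : deriv (gX r u v) = fun s =>
      deriv u s * Real.sinh (u s / r) * Real.cosh (v s / r)
        + deriv v s * Real.cosh (u s / r) * Real.sinh (v s / r) := by
    funext s
    exact ((((hchuS s).const_mul r).mul (hchvS s)).congr_d
      (by field_simp)).deriv
  have hdgY : deriv (gY r u v) = fun s =>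
      deriv u s * Real.sinh (u s / r) * Real.sinh (v s / r)
        + deriv v s * Real.cosh (u s / r) * Real.cosh (v s / r) := by
    funext s
    exact ((((hchuS s).const_mul r).mul (hshvS s)).congr_d
      (by field_simp)).deriv
  have hdgZ : deriv (gZ r u v) = fun s => deriv u s * Real.cosh (u s / r) := by
    funext s
    exact (((hshuS s).const_mul r).congr_d (by field_simp)).deriv
  simp only [EulerLagrange]
  refine forall_congr' fun t => ?_
  have hU2 : HasDerivAt (deriv u) (deriv (deriv u) t) t := (hu2 t).hasDerivAt
  have hV2 : HasDerivAt (deriv v) (deriv (deriv v) t) t := (hv2 t).hasDerivAt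
  have hcsq : Real.cosh (u t / r) ^ 2 = Real.sinh (u t / r) ^ 2 + 1 := Real.cosh_sq _
  have hCsq : Real.cosh (v t / r) ^ 2 = Real.sinh (v t / r) ^ 2 + 1 := Real.cosh_sq _
  have hc1 : (1:ℝ) ≤ Real.cosh (u t / r) := Real.one_le_cosh _
  have hUVne : deriv u t ≠ 0 ∨ deriv v t ≠ 0 := by
    by_contra hcon
    push_neg at hcon
    exact hreg t (by simp only [Prod.mk.injEq]; exact ⟨hcon.1, hcon.2⟩)
  have hUVpos : 0 < (deriv u t)^2 + (deriv v t)^2 := by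
    rcases hUVne with h | h
    · have h1 : 0 < (deriv u t)^2 := by positivity
      nlinarith [sq_nonneg (deriv v t)]
    · have h1 : 0 < (deriv v t)^2 := by positivity
      nlinarith [sq_nonneg (deriv u t)]
  have hgpos : 0 < (deriv u t)^2 + (Real.cosh (u t / r))^2 * (deriv v t)^2 := by
    nlinarith [mul_nonneg (mul_nonneg (sub_nonneg.2 hc1)
      (by linarith : (0:ℝ) ≤ Real.cosh (u t / r) + 1)) (sq_nonneg (deriv v t))]
  have hspos : 0 < speedSG r u v t := Real.sqrt_pos.2 hgpos
  have hsp2 : (speedSG r u v t) ^ 2 = (deriv u t)^2 + (Real.cosh (u t / r))^2 * (deriv v t)^2 :=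
    Real.sq_sqrt hgpos.le
  have hgder : HasDerivAt (fun s => (deriv u s) ^ 2 + (Real.cosh (u s / r)) ^ 2 * (deriv v s) ^ 2)
      (2*deriv u t*deriv (deriv u) t + 2*Real.cosh (u t / r)*Real.sinh (u t / r)*deriv u t*deriv v t^2/r + 2*Real.cosh (u t / r)^2*deriv v t*deriv (deriv v) t) t := by
    exact ((hU2.pow 2).add (((hchuS t).pow 2).mul (hV2.pow 2))).congr_d (by simp only [Pi.mul_apply, Pi.pow_apply]; push_cast; ring)
  have hsder : HasDerivAt (speedSG r u v) ((2*deriv u t*deriv (deriv u) t + 2*Real.cosh (u t / r)*Real.sinh (u t / r)*deriv u t*deriv v t^2/r + 2*Real.cosh (u t / r)^2*deriv v t*deriv (deriv v) t) / (2 * speedSG r u v t)) t := by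
    have h1 := (Real.hasDerivAt_sqrt hgpos.ne').comp t hgder
    exact h1.congr_d (by rw [show Real.sqrt ((deriv u t)^2 + (Real.cosh (u t / r))^2 * (deriv v t)^2) = speedSG r u v t from rfl]; ring)
  -- derivative facts for the EL side
  have hpart1 : deriv (fun a => Real.cosh (a / r) * Real.cosh (v t / r)) (u t)
      = Real.sinh (u t / r) * (1 / r) * Real.cosh (v t / r) :=
    (((hasDerivAt_id (u t)).div_const r).cosh.mul_const (Real.cosh (v t / r))).deriv
  have hpart2 : deriv (fun b => Real.cosh (u t / r) * Real.cosh (b / r)) (v t)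
      = Real.cosh (u t / r) * (Real.sinh (v t / r) * (1 / r)) :=
    (((hasDerivAt_id (v t)).div_const r).cosh.const_mul (Real.cosh (u t / r))).deriv
  have hn1 : HasDerivAt (fun s => Real.cosh (u s / r) * Real.cosh (v s / r) * deriv u s)
      (Real.sinh (u t / r)*Real.cosh (v t / r)*deriv u t^2/r + Real.cosh (u t / r)*Real.sinh (v t / r)*deriv u t*deriv v t/r + Real.cosh (u t / r)*Real.cosh (v t / r)*deriv (deriv u) t) t :=
    (((hchuS t).mul (hchvS t)).mul hU2).congr_d (by simp only [Pi.mul_apply]; ring)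
  have hd1 : deriv (fun s => Real.cosh (u s / r) * Real.cosh (v s / r) * deriv u s / speedSG r u v s) t
      = ((Real.sinh (u t / r)*Real.cosh (v t / r)*deriv u t^2/r + Real.cosh (u t / r)*Real.sinh (v t / r)*deriv u t*deriv v t/r + Real.cosh (u t / r)*Real.cosh (v t / r)*deriv (deriv u) t) * speedSG r u v t
          - Real.cosh (u t / r) * Real.cosh (v t / r) * deriv u t * ((2*deriv u t*deriv (deriv u) t + 2*Real.cosh (u t / r)*Real.sinh (u t / r)*deriv u t*deriv v t^2/r + 2*Real.cosh (u t / r)^2*deriv v t*deriv (deriv v) t) / (2 * speedSG r u v t)))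
        / (speedSG r u v t) ^ 2 :=
    (hn1.div hsder hspos.ne').deriv
  have hn2 : HasDerivAt
      (fun s => Real.cosh (u s / r) * Real.cosh (v s / r) * deriv v s * Real.cosh (u s / r) ^ 2)
      (3*Real.cosh (u t / r)^2*Real.sinh (u t / r)*deriv u t*Real.cosh (v t / r)*deriv v t/r + Real.cosh (u t / r)^3*Real.sinh (v t / r)*deriv v t^2/r + Real.cosh (u t / r)^3*Real.cosh (v t / r)*deriv (deriv v) t) t :=
    ((((hchuS t).mul (hchvS t)).mul hV2).mul ((hchuS t).pow 2)).congr_d (by simp only [Pi.mul_apply, Pi.pow_apply]; push_cast; ring)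
  have hd2 : deriv (fun s =>
        Real.cosh (u s / r) * Real.cosh (v s / r) * deriv v s * Real.cosh (u s / r) ^ 2
          / speedSG r u v s) t
      = ((3*Real.cosh (u t / r)^2*Real.sinh (u t / r)*deriv u t*Real.cosh (v t / r)*deriv v t/r + Real.cosh (u t / r)^3*Real.sinh (v t / r)*deriv v t^2/r + Real.cosh (u t / r)^3*Real.cosh (v t / r)*deriv (deriv v) t) * speedSG r u v t
          - Real.cosh (u t / r) * Real.cosh (v t / r) * deriv v t * Real.cosh (u t / r) ^ 2
            * ((2*deriv u t*deriv (deriv u) t + 2*Real.cosh (u t / r)*Real.sinh (u t / r)*deriv u t*deriv v t^2/r + 2*Real.cosh (u t / r)^2*deriv v t*deriv (deriv v) t) / (2 * speedSG r u v t)))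
        / (speedSG r u v t) ^ 2 :=
    (hn2.div hsder hspos.ne').deriv
  -- derivative facts for the curvature side
  have hd1Xt : deriv (gX r u v) t = deriv u t * Real.sinh (u t / r) * Real.cosh (v t / r) + deriv v t * Real.cosh (u t / r) * Real.sinh (v t / r) := by rw [hdgX]
  have hd1Yt : deriv (gY r u v) t = deriv u t * Real.sinh (u t / r) * Real.sinh (v t / r) + deriv v t * Real.cosh (u t / r) * Real.cosh (v t / r) := by rw [hdgY]
  have hd1Zt : deriv (gZ r u v) t = deriv u t * Real.cosh (u t / r) := by rw [hdgZ]
  have hd2X : deriv (deriv (gX r u v)) t = deriv (deriv u) t*Real.sinh (u t / r)*Real.cosh (v t / r) + (deriv u t)^2*Real.cosh (u t / r)*Real.cosh (v t / r)/r + 2*deriv u t*deriv v t*Real.sinh (u t / r)*Real.sinh (v t / r)/r + deriv (deriv v) t*Real.cosh (u t / r)*Real.sinh (v t / r) + (deriv v t)^2*Real.cosh (u t / r)*Real.cosh (v t / r)/r := by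
    rw [hdgX]
    exact (((hU2.mul (hshuS t)).mul (hchvS t)).add
      ((hV2.mul (hchuS t)).mul (hshvS t))).congr_d (by simp only [Pi.mul_apply]; ring) |>.deriv
  have hd2Y : deriv (deriv (gY r u v)) t = deriv (deriv u) t*Real.sinh (u t / r)*Real.sinh (v t / r) + (deriv u t)^2*Real.cosh (u t / r)*Real.sinh (v t / r)/r + 2*deriv u t*deriv v t*Real.sinh (u t / r)*Real.cosh (v t / r)/r + deriv (deriv v) t*Real.cosh (u t / r)*Real.cosh (v t / r) + (deriv v t)^2*Real.cosh (u t / r)*Real.sinh (v t / r)/r := by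
    rw [hdgY]
    exact (((hU2.mul (hshuS t)).mul (hshvS t)).add
      ((hV2.mul (hchuS t)).mul (hchvS t))).congr_d (by simp only [Pi.mul_apply]; ring) |>.deriv
  have hd2Z : deriv (deriv (gZ r u v)) t = deriv (deriv u) t*Real.cosh (u t / r) + (deriv u t)^2*Real.sinh (u t / r)/r := by
    rw [hdgZ]
    exact ((hU2.mul (hchuS t)).congr_d (by ring)).deriv
  have hsp3 : speed3 (gX r u v) (gY r u v) (gZ r u v) t = speedSG r u v t := by
    simp only [speed3]
    rw [hd1Xt, hd1Yt, hd1Zt,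
      show speedSG r u v t = Real.sqrt ((deriv u t)^2 + (Real.cosh (u t / r))^2 * (deriv v t)^2) from rfl]
    congr 1
    linear_combination ((deriv u t)^2 - (deriv v t)^2 - (deriv v t)^2*(Real.sinh (v t / r))^2 + (deriv v t)^2*(Real.cosh (v t / r))^2) * hcsq
      + ((deriv v t)^2 + (deriv v t)^2*(Real.sinh (u t / r))^2 - (deriv u t)^2*(Real.sinh (u t / r))^2) * hCsq
  have hmink : mink3 (unitNormal r u v t) ((-1, 0, 0) : ℝ × ℝ × ℝ)
      = (speedSG r u v t)⁻¹ * (deriv u t * Real.sinh (v t / r) - deriv v t * Real.cosh (u t / r) * Real.sinh (u t / r) * Real.cosh (v t / r)) := by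
    simp only [mink3, unitNormal, psiU, psiV, Prod.smul_mk, Prod.mk_add_mk, smul_eq_mul]
    field_simp
    ring
  -- the three equivalences
  have hEL1 : (deriv (fun a => Real.cosh (a / r) * Real.cosh (v t / r)) (u t) * speedSG r u v t + Real.cosh (u t / r) * Real.cosh (v t / r) * Real.sinh (u t / r) * Real.cosh (u t / r) * deriv v t ^ 2 / (r * speedSG r u v t) = deriv (fun s => Real.cosh (u s / r) * Real.cosh (v s / r) * deriv u s / speedSG r u v s) t) ↔ E1e r (deriv u t) (deriv v t) (deriv (deriv u) t) (deriv (deriv v) t) (Real.cosh (u t / r)) (Real.sinh (u t / r)) (Real.cosh (v t / r)) (Real.sinh (v t / r)) (speedSG r u v t) = 0 := by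
    rw [hpart1, hd1]
    constructor <;> intro h
    · linear_combination (norm := (simp only [E1e]; field_simp; ring))
        (speedSG r u v t)^3 * h
    · linear_combination (norm := (simp only [E1e] at h ⊢; field_simp; ring))
        (1 / (speedSG r u v t)^3) * h
  have hEL2 : (deriv (fun b => Real.cosh (u t / r) * Real.cosh (b / r)) (v t) * speedSG r u v t = deriv (fun s => Real.cosh (u s / r) * Real.cosh (v s / r) * deriv v s * Real.cosh (u s / r) ^ 2 / speedSG r u v s) t) ↔ E2e r (deriv u t) (deriv v t) (deriv (deriv u) t) (deriv (deriv v) t) (Real.cosh (u t / r)) (Real.sinh (u t / r)) (Real.cosh (v t / r)) (Real.sinh (v t / r)) (speedSG r u v t) = 0 := by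
    rw [hpart2, hd2]
    constructor <;> intro h
    · linear_combination (norm := (simp only [E2e]; field_simp; ring))
        (speedSG r u v t)^3 * h
    · linear_combination (norm := (simp only [E2e] at h ⊢; field_simp; ring))
        (1 / (speedSG r u v t)^3) * h
  have hKAP : (kappaSG r u v t = -(mink3 (unitNormal r u v t) ((-1, 0, 0) : ℝ × ℝ × ℝ)) / (r * Real.cosh (u t / r) * Real.cosh (v t / r))) ↔ Ke r (deriv u t) (deriv v t) (deriv (deriv u) t) (deriv (deriv v) t) (Real.cosh (u t / r)) (Real.sinh (u t / r)) (Real.cosh (v t / r)) (Real.sinh (v t / r)) = 0 := by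
    simp only [kappaSG, kappaH2]
    rw [hsp3, hd2X, hd2Y, hd2Z, hd1Xt, hd1Yt, hd1Zt, hmink,
      show gX r u v t = r * Real.cosh (u t / r) * Real.cosh (v t / r) from rfl,
      show gY r u v t = r * Real.cosh (u t / r) * Real.sinh (v t / r) from rfl,
      show gZ r u v t = r * Real.sinh (u t / r) from rfl]
    constructor <;> intro h
    · linear_combination (norm := (simp only [Ke]; field_simp; ring))
        ((speedSG r u v t)^3*Real.cosh (u t / r)*Real.cosh (v t / r)) * h - ((deriv u t * Real.sinh (v t / r) - deriv v t * Real.cosh (u t / r) * Real.sinh (u t / r) * Real.cosh (v t / r))/r) * hsp2 - (-(deriv v t)*(deriv (deriv u) t)*Real.cosh (u t / r)^2*Real.sinh (u t / r)^2*Real.cosh (v t / r) + (deriv v t)*(deriv (deriv u) t)*Real.cosh (u t / r)^4*Real.cosh (v t / r) - (deriv v t)^3*Real.cosh (u t / r)^3*Real.sinh (u t / r)*Real.cosh (v t / r)/r + (deriv u t)*(deriv (deriv v) t)*Real.cosh (u t / r)^2*Real.sinh (u t / r)^2*Real.cosh (v t / r) - (deriv u t)*(deriv (deriv v) t)*Real.cosh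 (u t / r)^4*Real.cosh (v t / r) + 2*(deriv u t)^2*(deriv v t)*Real.cosh (u t / r)*Real.sinh (u t / r)^3*Real.cosh (v t / r)/r - 2*(deriv u t)^2*(deriv v t)*Real.cosh (u t / r)^3*Real.sinh (u t / r)*Real.cosh (v t / r)/r) * hCsq - ((deriv v t)*(deriv (deriv u) t)*Real.cosh (u t / r)^2*Real.cosh (v t / r) - (deriv u t)*(deriv (deriv v) t)*Real.cosh (u t / r)^2*Real.cosh (v t / r) - 2*(deriv u t)^2*(deriv v t)*Real.cosh (u t / r)*Real.sinh (u t / r)*Real.cosh (v t / r)/r) * hcsq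
    · linear_combination (norm := (simp only [Ke] at h ⊢; field_simp; ring))
        (1 / ((speedSG r u v t)^3*Real.cosh (u t / r)*Real.cosh (v t / r))) * h + (((deriv u t * Real.sinh (v t / r) - deriv v t * Real.cosh (u t / r) * Real.sinh (u t / r) * Real.cosh (v t / r))/r) / ((speedSG r u v t)^3*Real.cosh (u t / r)*Real.cosh (v t / r))) * hsp2
          + ((-(deriv v t)*(deriv (deriv u) t)*Real.cosh (u t / r)^2*Real.sinh (u t / r)^2*Real.cosh (v t / r) + (deriv v t)*(deriv (deriv u) t)*Real.cosh (u t / r)^4*Real.cosh (v t / r) - (deriv v t)^3*Real.cosh (u t / r)^3*Real.sinh (u t / r)*Real.cosh (v t / r)/r + (deriv u t)*(deriv (deriv v) t)*Real.cosh (u t / r)^2*Real.sinh (u t / r)^2*Real.cosh (v t / r) - (deriv u t)*(deriv (deriv v) t)*Real.cosh (u t / r)^4*Real.cosh (v t / r) + 2*(deriv u t)^2*(deriv v t)*Real.cosh (u t / r)*Real.sinh (u t / r)^3*Real.cosh (v t / r)/r - 2*(deriv u t)^2*(deriv v t)*Real.cosh (u t / r)^3*Real.sinh (u t / r)*Real.cosh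 (v t / r)/r) / ((speedSG r u v t)^3*Real.cosh (u t / r)*Real.cosh (v t / r))) * hCsq + (((deriv v t)*(deriv (deriv u) t)*Real.cosh (u t / r)^2*Real.cosh (v t / r) - (deriv u t)*(deriv (deriv v) t)*Real.cosh (u t / r)^2*Real.cosh (v t / r) - 2*(deriv u t)^2*(deriv v t)*Real.cosh (u t / r)*Real.sinh (u t / r)*Real.cosh (v t / r)/r) / ((speedSG r u v t)^3*Real.cosh (u t / r)*Real.cosh (v t / r))) * hcsq
  rw [hEL1, hEL2, hKAP]
  have hA1 := alg1 r (deriv u t) (deriv v t) (deriv (deriv u) t) (deriv (deriv v) t) (Real.cosh (u t / r)) (Real.sinh (u t / r)) (Real.cosh (v t / r)) (Real.sinh (v t / r)) (speedSG r u v t) hsp2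
  have hA2 := alg2 r (deriv u t) (deriv v t) (deriv (deriv u) t) (deriv (deriv v) t) (Real.cosh (u t / r)) (Real.sinh (u t / r)) (Real.cosh (v t / r)) (Real.sinh (v t / r)) (speedSG r u v t) hsp2
  constructor
  · rintro ⟨h1, h2⟩
    by_contra hK
    have hx : -((Real.cosh (u t / r)) * (deriv v t)) * Ke r (deriv u t) (deriv v t) (deriv (deriv u) t) (deriv (deriv v) t) (Real.cosh (u t / r)) (Real.sinh (u t / r)) (Real.cosh (v t / r)) (Real.sinh (v t / r)) = 0 := hA1.symm.trans h1
    have hy : ((Real.cosh (u t / r)) * (deriv u t)) * Ke r (deriv u t) (deriv v t) (deriv (deriv u) t) (deriv (deriv v) t) (Real.cosh (u t / r)) (Real.sinh (u t / r)) (Real.cosh (v t / r)) (Real.sinh (v t / r)) = 0 := hA2.symm.trans h2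
    have hV0 : (deriv v t) = 0 := by
      rcases mul_eq_zero.mp hx with h' | h'
      · rcases mul_eq_zero.mp (neg_eq_zero.mp h') with h'' | h''
        · exact absurd h'' (Real.cosh_pos _).ne'
        · exact h''
      · exact absurd h' hK
    have hU0 : (deriv u t) = 0 := by
      rcases mul_eq_zero.mp hy with h' | h'
      · rcases mul_eq_zero.mp h' with h'' | h''
        · exact absurd h'' (Real.cosh_pos _).ne'
        · exact h''
      · exact absurd h' hK
    rcases hUVne with h | h
    · exact h hU0
    · exact h hV0
  · intro hK
    exact ⟨hA1.trans (by rw [hK, mul_zero]), hA2.trans (by rw [hK, mul_zero])⟩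
end
end
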